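/- arXiv:2104.15021 — 3 statements merged into one kernel-verified Lean document; each statement's English description precedes it below -/
import Mathlib

section
/- If F is a face of a polyhedron P, then any face of F is a face of P. -/
open Matrix Set
open scoped Classical

/-- A polyhedron in `ℝⁿ`: the solution set of a finite system of linear
inequalities `A x ≥ b`. -/
def IsPolyhedron {n : ℕ} (P : Set (Fin n → ℝ)) : Prop :=
  ∃ (m : ℕ) (A : Fin m → Fin n → ℝ) (b : Fin m → ℝ),
    P = {x | ∀ i, A i ⬝ᵥ x ≥ b i}

/-- A face of `P`: the empty set or the set of minimizers of a linear
functional over `P`. -/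
def IsFace {n : ℕ} (P F : Set (Fin n → ℝ)) : Prop :=
  F = ∅ ∨ ∃ c : Fin n → ℝ, F = {x ∈ P | ∀ y ∈ P, c ⬝ᵥ x ≤ c ⬝ᵥ y}

/-- Dimension of a polyhedron: dimension of the direction of its affine
hull, with the convention `pdim ∅ = -1`. -/
noncomputable def pdim {n : ℕ} (P : Set (Fin n → ℝ)) : ℤ :=
  if P = ∅ then -1 else (Module.finrank ℝ (vectorSpan ℝ P) : ℤ)

private lemma dot_sum' {n : ℕ} {ι : Type*} (u : Fin n → ℝ) (s : Finset ι) (w : ι → Fin n → ℝ) :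
    u ⬝ᵥ (∑ i ∈ s, w i) = ∑ i ∈ s, u ⬝ᵥ w i := by
  simp [dotProduct, Finset.sum_apply, Finset.mul_sum]
  exact Finset.sum_comm

private lemma sum_dot' {n : ℕ} {ι : Type*} (u : Fin n → ℝ) (s : Finset ι) (w : ι → Fin n → ℝ) :
    (∑ i ∈ s, w i) ⬝ᵥ u = ∑ i ∈ s, w i ⬝ᵥ u := by
  simp [dotProduct, Finset.sum_apply, Finset.sum_mul]
  exact Finset.sum_comm

private lemma dot_affine {n : ℕ} (u z x : Fin n → ℝ) (t : ℝ) :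
    u ⬝ᵥ (z + t • (z - x)) = u ⬝ᵥ z + t * (u ⬝ᵥ z - u ⬝ᵥ x) := by
  rw [dotProduct_add, dotProduct_smul, smul_eq_mul, dotProduct_sub]

/-- Key lemma: if `H` is the (nonempty) set of minimizers of `d` over the polyhedron
`Q = {x | A x ≥ b}`, then any point of `Q` satisfying with equality every constraint
that is tight on all of `H` belongs to `H`. -/
private lemma key {n : ℕ} {ι : Type*} [Fintype ι] (A : ι → Fin n → ℝ) (b : ι → ℝ)
    (d : Fin n → ℝ) (Q H : Set (Fin n → ℝ))
    (hQ : Q = {x | ∀ i, A i ⬝ᵥ x ≥ b i})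
    (hH : H = {x ∈ Q | ∀ y ∈ Q, d ⬝ᵥ x ≤ d ⬝ᵥ y})
    (x₀ : Fin n → ℝ) (hx₀ : x₀ ∈ H)
    (x : Fin n → ℝ) (hxQ : x ∈ Q)
    (hx : ∀ i, (∀ z ∈ H, A i ⬝ᵥ z = b i) → A i ⬝ᵥ x = b i) :
    x ∈ H := by
  classical
  subst hQ
  subst hH
  obtain ⟨hx₀Q, hx₀min⟩ := hx₀
  -- choose witnesses
  have hwex : ∀ i : ι, ∃ w, (w ∈ {x ∈ {x | ∀ i, A i ⬝ᵥ x ≥ b i} |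
      ∀ y ∈ {x | ∀ i, A i ⬝ᵥ x ≥ b i}, d ⬝ᵥ x ≤ d ⬝ᵥ y}) ∧
      (¬ (∀ z ∈ {x ∈ {x | ∀ i, A i ⬝ᵥ x ≥ b i} |
      ∀ y ∈ {x | ∀ i, A i ⬝ᵥ x ≥ b i}, d ⬝ᵥ x ≤ d ⬝ᵥ y}, A i ⬝ᵥ z = b i) →
        b i < A i ⬝ᵥ w) := by
    intro i
    by_cases hi : ∀ z ∈ {x ∈ {x | ∀ i, A i ⬝ᵥ x ≥ b i} |
      ∀ y ∈ {x | ∀ i, A i ⬝ᵥ x ≥ b i}, d ⬝ᵥ x ≤ d ⬝ᵥ y}, A i ⬝ᵥ z = b i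
    · exact ⟨x₀, ⟨hx₀Q, hx₀min⟩, fun h => absurd hi h⟩
    · push_neg at hi
      obtain ⟨z, hzH, hzne⟩ := hi
      exact ⟨z, hzH, fun _ => lt_of_le_of_ne (hzH.1 i) (Ne.symm hzne)⟩
  choose w hwH hwgt using hwex
  set N : ℝ := (Fintype.card ι : ℝ) + 1 with hNdef
  have hN : 0 < N := by positivity
  set z : Fin n → ℝ := N⁻¹ • (x₀ + ∑ i : ι, w i) with hzdef
  have hdotz : ∀ v : Fin n → ℝ, v ⬝ᵥ z = N⁻¹ * (v ⬝ᵥ x₀ + ∑ i : ι, v ⬝ᵥ w i) := by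
    intro v
    rw [hzdef, dotProduct_smul, smul_eq_mul, dotProduct_add, dot_sum']
  -- z ∈ Q
  have hzQ : ∀ i, A i ⬝ᵥ z ≥ b i := by
    intro i
    have h2 : (Fintype.card ι : ℝ) * b i ≤ ∑ j : ι, A i ⬝ᵥ w j := by
      calc (Fintype.card ι : ℝ) * b i = ∑ _j : ι, b i := by
            simp [mul_comm]
        _ ≤ ∑ j : ι, A i ⬝ᵥ w j := Finset.sum_le_sum fun j _ => (hwH j).1 i
    have h1 : b i ≤ A i ⬝ᵥ x₀ := hx₀Q i
    have := hdotz (A i)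
    rw [this]
    rw [ge_iff_le, le_inv_mul_iff₀ hN]
    have hexp : N * b i = (Fintype.card ι : ℝ) * b i + b i := by rw [hNdef]; ring
    linarith
  -- d-value of z equals that of x₀
  have hdw : ∀ j, d ⬝ᵥ w j = d ⬝ᵥ x₀ :=
    fun j => le_antisymm ((hwH j).2 x₀ hx₀Q) (hx₀min (w j) (hwH j).1)
  have hdz : d ⬝ᵥ z = d ⬝ᵥ x₀ := by
    rw [hdotz d]
    rw [Finset.sum_congr rfl fun j _ => hdw j]
    simp
    field_simp
    ring
  have hzmin : ∀ y ∈ {x | ∀ i, A i ⬝ᵥ x ≥ b i}, d ⬝ᵥ z ≤ d ⬝ᵥ y := by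
    intro y hy; rw [hdz]; exact hx₀min y hy
  have hzH : z ∈ {x ∈ {x | ∀ i, A i ⬝ᵥ x ≥ b i} |
      ∀ y ∈ {x | ∀ i, A i ⬝ᵥ x ≥ b i}, d ⬝ᵥ x ≤ d ⬝ᵥ y} := ⟨hzQ, hzmin⟩
  -- strict inequality at z for non-tight constraints
  have hzstrict : ∀ i, ¬ (∀ z' ∈ {x ∈ {x | ∀ i, A i ⬝ᵥ x ≥ b i} |
      ∀ y ∈ {x | ∀ i, A i ⬝ᵥ x ≥ b i}, d ⬝ᵥ x ≤ d ⬝ᵥ y}, A i ⬝ᵥ z' = b i) →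
      b i < A i ⬝ᵥ z := by
    intro i hi
    have hstrict : (Fintype.card ι : ℝ) * b i < ∑ j : ι, A i ⬝ᵥ w j := by
      have : ∑ _j : ι, b i < ∑ j : ι, A i ⬝ᵥ w j := by
        apply Finset.sum_lt_sum (fun j _ => (hwH j).1 i)
        exact ⟨i, Finset.mem_univ i, hwgt i hi⟩
      simpa [mul_comm] using this
    have h1 : b i ≤ A i ⬝ᵥ x₀ := hx₀Q i
    rw [hdotz (A i), lt_inv_mul_iff₀ hN]
    have hexp : N * b i = (Fintype.card ι : ℝ) * b i + b i := by rw [hNdef]; ring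
    linarith
  -- choose t
  set r : ι → ℝ := fun i => A i ⬝ᵥ x - A i ⬝ᵥ z with hrdef
  set s : ι → ℝ := fun i => A i ⬝ᵥ z - b i with hsdef
  have hs_nonneg : ∀ i, 0 ≤ s i := fun i => sub_nonneg.mpr (hzQ i)
  have hrs : ∀ i, 0 < r i → 0 < s i := by
    intro i hr
    by_cases hi : ∀ z' ∈ {x ∈ {x | ∀ i, A i ⬝ᵥ x ≥ b i} |
        ∀ y ∈ {x | ∀ i, A i ⬝ᵥ x ≥ b i}, d ⬝ᵥ x ≤ d ⬝ᵥ y}, A i ⬝ᵥ z' = b i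
    · exfalso
      have h1 : A i ⬝ᵥ z = b i := hi z hzH
      have h2 : A i ⬝ᵥ x = b i := hx i hi
      rw [hrdef] at hr
      simp only at hr
      rw [h1, h2] at hr
      simp at hr
    · exact sub_pos.mpr (hzstrict i hi)
  set tf : ι → ℝ := fun i => if 0 < r i then s i / r i else 1 with htfdef
  set T : Finset ℝ := insert 1 (Finset.image tf Finset.univ) with hTdef
  have hTne : T.Nonempty := ⟨1, Finset.mem_insert_self 1 _⟩
  set t : ℝ := T.min' hTne with htdef
  have htpos : 0 < t := by
    have hmem : t ∈ T := Finset.min'_mem T hTne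
    rw [hTdef] at hmem
    rcases Finset.mem_insert.mp hmem with h | h
    · rw [h]; norm_num
    · obtain ⟨i, _, hi⟩ := Finset.mem_image.mp h
      rw [← hi, htfdef]
      by_cases hri : 0 < r i
      · simp only [if_pos hri]
        exact div_pos (hrs i hri) hri
      · simp only [if_neg hri]; norm_num
  have hti : ∀ i, t * r i ≤ s i := by
    intro i
    by_cases hri : 0 < r i
    · have h1 : t ≤ tf i := Finset.min'_le T _ (Finset.mem_insert_of_mem
        (Finset.mem_image.mpr ⟨i, Finset.mem_univ i, rfl⟩))
      rw [htfdef] at h1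
      simp only [if_pos hri] at h1
      calc t * r i ≤ (s i / r i) * r i := mul_le_mul_of_nonneg_right h1 hri.le
        _ = s i := div_mul_cancel₀ _ (ne_of_gt hri)
    · push_neg at hri
      have : t * r i ≤ 0 := mul_nonpos_of_nonneg_of_nonpos htpos.le hri
      linarith [hs_nonneg i]
  -- the perturbed point y
  set y : Fin n → ℝ := z + t • (z - x) with hydef
  have hyQ : y ∈ {x | ∀ i, A i ⬝ᵥ x ≥ b i} := by
    intro i
    show A i ⬝ᵥ y ≥ b i
    have hay : A i ⬝ᵥ y = A i ⬝ᵥ z + t * (A i ⬝ᵥ z - A i ⬝ᵥ x) := by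
      rw [hydef]; exact dot_affine (A i) z x t
    rw [hay]
    have := hti i
    rw [hrdef, hsdef] at this
    simp only at this
    nlinarith
  have hdy : d ⬝ᵥ y = d ⬝ᵥ z + t * (d ⬝ᵥ z - d ⬝ᵥ x) := by
    rw [hydef]; exact dot_affine d z x t
  have h0 : d ⬝ᵥ z ≤ d ⬝ᵥ y := hzmin y hyQ
  have hdx : d ⬝ᵥ x ≤ d ⬝ᵥ z := by nlinarith
  exact ⟨hxQ, fun y' hy' => le_trans hdx (hzmin y' hy')⟩

theorem face_of_face {n : ℕ} (P F G : Set (Fin n → ℝ)) (hP : IsPolyhedron P)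
    (hF : IsFace P F) (hG : IsFace F G) : IsFace P G := by
  classical
  rcases hG with rfl | ⟨d, hGdef⟩
  · exact Or.inl rfl
  rcases hF with hFe | ⟨c, hFdef⟩
  · left; rw [hGdef, hFe]; simp
  by_cases hGne : G = ∅
  · exact Or.inl hGne
  obtain ⟨x₀, hx₀G⟩ := Set.nonempty_iff_ne_empty.mpr hGne
  obtain ⟨m, A, b, hPdef⟩ := hP
  have hx₀F : x₀ ∈ F := by rw [hGdef] at hx₀G; exact hx₀G.1
  have hx₀P : x₀ ∈ P := by rw [hFdef] at hx₀F; exact hx₀F.1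
  have hx₀min : ∀ y ∈ P, c ⬝ᵥ x₀ ≤ c ⬝ᵥ y := by rw [hFdef] at hx₀F; exact hx₀F.2
  set μ : ℝ := c ⬝ᵥ x₀ with hμdef
  -- F = {x ∈ P | c ⬝ᵥ x = μ}
  have hFeq : F = {x ∈ P | c ⬝ᵥ x = μ} := by
    rw [hFdef]
    ext x
    constructor
    · rintro ⟨hxP, hxmin⟩
      exact ⟨hxP, le_antisymm (hxmin x₀ hx₀P) (hx₀min x hxP)⟩
    · rintro ⟨hxP, hxeq⟩
      exact ⟨hxP, fun y hy => hxeq ▸ hx₀min y hy⟩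
  -- F as a polyhedron over index ι = Fin m ⊕ Bool
  set A' : (Fin m ⊕ Bool) → Fin n → ℝ := Sum.elim A (fun s => if s then c else -c) with hA'def
  set b' : (Fin m ⊕ Bool) → ℝ := Sum.elim b (fun s => if s then μ else -μ) with hb'def
  have hFpoly : F = {x | ∀ i, A' i ⬝ᵥ x ≥ b' i} := by
    rw [hFeq, hPdef]
    ext x
    constructor
    · rintro ⟨hxP, hxeq⟩ (i | s)
      · exact hxP i
      · cases s
        · simp only [hA'def, hb'def, Sum.elim_inr]
          norm_num [neg_dotProduct, hxeq]
        · simp only [hA'def, hb'def, Sum.elim_inr]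
          norm_num [hxeq]
    · intro h
      refine ⟨fun i => h (Sum.inl i), ?_⟩
      have h1 := h (Sum.inr true)
      have h2 := h (Sum.inr false)
      simp only [hA'def, hb'def, Sum.elim_inr] at h1 h2
      norm_num [neg_dotProduct] at h1 h2
      linarith
  -- the tight set S
  set S : Finset (Fin m) := Finset.univ.filter (fun i => ∀ z ∈ G, A i ⬝ᵥ z = b i) with hSdef
  set e : Fin n → ℝ := c + ∑ i ∈ S, A i with hedef
  set β : ℝ := μ + ∑ i ∈ S, b i with hβdef
  have hdote : ∀ v : Fin n → ℝ, e ⬝ᵥ v = c ⬝ᵥ v + ∑ i ∈ S, A i ⬝ᵥ v := by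
    intro v
    rw [hedef, add_dotProduct, sum_dot']
  have hcge : ∀ x ∈ P, μ ≤ c ⬝ᵥ x := fun x hx => hx₀min x hx
  have hege : ∀ x ∈ P, β ≤ e ⬝ᵥ x := by
    intro x hx
    rw [hdote, hβdef]
    have h1 : μ ≤ c ⬝ᵥ x := hcge x hx
    have h2 : ∑ i ∈ S, b i ≤ ∑ i ∈ S, A i ⬝ᵥ x := by
      apply Finset.sum_le_sum
      intro i _
      rw [hPdef] at hx
      exact hx i
    linarith
  -- equality characterization
  have hechar : ∀ x ∈ P, e ⬝ᵥ x = β ↔ (c ⬝ᵥ x = μ ∧ ∀ i ∈ S, A i ⬝ᵥ x = b i) := by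
    intro x hx
    constructor
    · intro heq
      rw [hdote, hβdef] at heq
      have h1 : μ ≤ c ⬝ᵥ x := hcge x hx
      have h2 : ∀ i ∈ S, b i ≤ A i ⬝ᵥ x := by
        intro i _; rw [hPdef] at hx; exact hx i
      have h3 : ∑ i ∈ S, b i ≤ ∑ i ∈ S, A i ⬝ᵥ x := Finset.sum_le_sum h2
      have hceq : c ⬝ᵥ x = μ := by linarith
      have hsumeq : ∑ i ∈ S, A i ⬝ᵥ x = ∑ i ∈ S, b i := by linarith
      refine ⟨hceq, ?_⟩
      intro i hi
      by_contra hne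
      have hlt : b i < A i ⬝ᵥ x := lt_of_le_of_ne (h2 i hi) (Ne.symm hne)
      have : ∑ j ∈ S, b j < ∑ j ∈ S, A j ⬝ᵥ x :=
        Finset.sum_lt_sum h2 ⟨i, hi, hlt⟩
      linarith
    · rintro ⟨hceq, htight⟩
      rw [hdote, hβdef, hceq]
      congr 1
      exact Finset.sum_congr rfl htight
  -- x₀ achieves β
  have hx₀tight : ∀ i ∈ S, A i ⬝ᵥ x₀ = b i := by
    intro i hi
    rw [hSdef] at hi
    exact (Finset.mem_filter.mp hi).2 x₀ hx₀G
  have hex₀ : e ⬝ᵥ x₀ = β := (hechar x₀ hx₀P).mpr ⟨rfl, hx₀tight⟩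
  right
  refine ⟨e, ?_⟩
  ext x
  constructor
  · -- G ⊆ argmin
    intro hxG
    have hxF : x ∈ F := by rw [hGdef] at hxG; exact hxG.1
    have hxP : x ∈ P := by rw [hFeq] at hxF; exact hxF.1
    have hxc : c ⬝ᵥ x = μ := by rw [hFeq] at hxF; exact hxF.2
    have hxtight : ∀ i ∈ S, A i ⬝ᵥ x = b i := by
      intro i hi
      rw [hSdef] at hi
      exact (Finset.mem_filter.mp hi).2 x hxG
    have hex : e ⬝ᵥ x = β := (hechar x hxP).mpr ⟨hxc, hxtight⟩
    exact ⟨hxP, fun y hy => hex ▸ hege y hy⟩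
  · -- argmin ⊆ G
    rintro ⟨hxP, hxmin⟩
    have hex : e ⬝ᵥ x = β :=
      le_antisymm (hex₀ ▸ hxmin x₀ hx₀P) (hege x hxP)
    obtain ⟨hxc, hxtight⟩ := (hechar x hxP).mp hex
    have hxF : x ∈ F := by rw [hFeq]; exact ⟨hxP, hxc⟩
    -- apply key lemma with Q := F, H := G
    have hGdef' : G = {x ∈ F | ∀ y ∈ F, d ⬝ᵥ x ≤ d ⬝ᵥ y} := hGdef
    refine key A' b' d F G hFpoly hGdef' x₀ hx₀G x hxF ?_
    rintro (i | s) hi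
    · -- inl: a constraint of P tight on G
      simp only [hA'def, hb'def, Sum.elim_inl]
      apply hxtight
      rw [hSdef, Finset.mem_filter]
      exact ⟨Finset.mem_univ i, fun z hz => hi z hz⟩
    · -- inr: the ±c constraints, automatically equalities on F
      cases s
      · simp only [hA'def, hb'def, Sum.elim_inr]
        norm_num [neg_dotProduct, hxc]
      · simp only [hA'def, hb'def, Sum.elim_inr]
        norm_num [hxc]
end

section
/- Every proper nonempty face of a nonempty polyhedron P is an intersection of facets of P; hence the face lattice of P is coatomistic. -/
open Matrix Set
open scoped Classical

/-- A facet of `P` is a face of dimension `dim P - 1`. -/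
noncomputable def IsFacet {n : ℕ} (P F : Set (Fin n → ℝ)) : Prop :=
  IsFace P F ∧ pdim F = pdim P - 1

/-- the linear functional x ↦ c ⬝ᵥ x -/
noncomputable def dotLin {n : ℕ} (c : Fin n → ℝ) : (Fin n → ℝ) →ₗ[ℝ] ℝ where
  toFun x := c ⬝ᵥ x
  map_add' x y := by simp [dotProduct_add]
  map_smul' r x := by simp

lemma dot_vanish {n : ℕ} (c : Fin n → ℝ) (s : Set (Fin n → ℝ))
    (h : ∀ x ∈ s, ∀ y ∈ s, c ⬝ᵥ x = c ⬝ᵥ y) :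
    ∀ v ∈ vectorSpan ℝ s, c ⬝ᵥ v = 0 := by
  intro v hv
  have : vectorSpan ℝ s ≤ LinearMap.ker (dotLin c) := by
    rw [vectorSpan_def, Submodule.span_le]
    rintro w ⟨x, hx, y, hy, rfl⟩
    simp only [SetLike.mem_coe, LinearMap.mem_ker, dotLin, LinearMap.coe_mk, AddHom.coe_mk,
      vsub_eq_sub, dotProduct_sub]
    rw [h x hx y hy]; ring
  simpa [dotLin] using this hv

lemma finset_exists_pos_le {ι : Type*} (T : Finset ι) (g : ι → ℝ) (hg : ∀ j ∈ T, 0 < g j) :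
    ∃ ε : ℝ, 0 < ε ∧ ∀ j ∈ T, ε ≤ g j := by
  classical
  induction T using Finset.induction with
  | empty => exact ⟨1, one_pos, by simp⟩
  | @insert a T' hj ih =>
    obtain ⟨ε, hε, hle⟩ := ih (fun j hjj => hg j (Finset.mem_insert_of_mem hjj))
    refine ⟨min ε (g a), lt_min hε (hg a (Finset.mem_insert_self a T')), ?_⟩
    intro j hjj
    rcases Finset.mem_insert.1 hjj with rfl | hjj
    · exact min_le_right _ _
    · exact le_trans (min_le_left _ _) (hle j hjj)

set_option synthInstance.maxHeartbeats 1000000 in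
lemma finrank_inf_ker {n : ℕ} (W : Submodule ℝ (Fin n → ℝ)) (f : (Fin n → ℝ) →ₗ[ℝ] ℝ)
    (hw : ∃ w ∈ W, f w ≠ 0) :
    Module.finrank ℝ (W ⊓ LinearMap.ker f : Submodule ℝ (Fin n → ℝ)) + 1 = Module.finrank ℝ W := by
  obtain ⟨w, hwW, hfw⟩ := hw
  set g := f.domRestrict W with hg
  have hrange : LinearMap.range g = ⊤ := by
    rw [LinearMap.range_eq_top]
    intro r
    refine ⟨⟨(r / f w) • w, W.smul_mem _ hwW⟩, ?_⟩
    simp [hg, div_mul_cancel₀, hfw]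
  have h1 : Module.finrank ℝ (LinearMap.range g) = 1 := by
    rw [hrange]; simpa using finrank_top ℝ ℝ
  have h2 := LinearMap.finrank_range_add_finrank_ker g
  rw [h1] at h2
  have hker : LinearMap.ker g = Submodule.comap W.subtype (LinearMap.ker f) :=
    LinearMap.ker_domRestrict W f
  have hcomap : Submodule.comap W.subtype (W ⊓ LinearMap.ker f) =
      Submodule.comap W.subtype (LinearMap.ker f) := by
    ext ⟨v, hv⟩
    simp [hv]
  have : Module.finrank ℝ (LinearMap.ker g) =
      Module.finrank ℝ (W ⊓ LinearMap.ker f : Submodule ℝ (Fin n → ℝ)) := by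
    rw [hker, ← hcomap]
    exact (Submodule.comapSubtypeEquivOfLe (inf_le_left : W ⊓ LinearMap.ker f ≤ W)).finrank_eq
  omega

/-- solution set of a subsystem -/
def sys {n m : ℕ} (A : Fin m → Fin n → ℝ) (b : Fin m → ℝ) (S : Finset (Fin m)) :
    Set (Fin n → ℝ) := {x | ∀ i ∈ S, A i ⬝ᵥ x ≥ b i}

lemma exists_strict {n m : ℕ} (A : Fin m → Fin n → ℝ) (b : Fin m → ℝ)
    (Q : Set (Fin n → ℝ)) (hne : Q.Nonempty)
    (hmid : ∀ x ∈ Q, ∀ y ∈ Q, (1/2 : ℝ) • (x + y) ∈ Q)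
    (T : Finset (Fin m)) (hQ : ∀ x ∈ Q, ∀ j ∈ T, A j ⬝ᵥ x ≥ b j)
    (hT : ∀ j ∈ T, ∃ y ∈ Q, A j ⬝ᵥ y > b j) :
    ∃ x ∈ Q, ∀ j ∈ T, A j ⬝ᵥ x > b j := by
  classical
  induction T using Finset.induction with
  | empty => exact ⟨hne.choose, hne.choose_spec, by simp⟩
  | @insert a T' ha ih =>
    obtain ⟨x, hxQ, hx⟩ := ih (fun x hx j hj => hQ x hx j (Finset.mem_insert_of_mem hj))
      (fun j hj => hT j (Finset.mem_insert_of_mem hj))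
    obtain ⟨y, hyQ, hy⟩ := hT a (Finset.mem_insert_self a T')
    refine ⟨(1/2 : ℝ) • (x + y), hmid x hxQ y hyQ, ?_⟩
    intro j hj
    have hdot : A j ⬝ᵥ ((1/2 : ℝ) • (x + y)) = (1/2) * (A j ⬝ᵥ x) + (1/2) * (A j ⬝ᵥ y) := by
      rw [dotProduct_smul, dotProduct_add, smul_eq_mul]; ring
    rcases Finset.mem_insert.1 hj with rfl | hj
    · have h1 : A j ⬝ᵥ x ≥ b j := hQ x hxQ j (Finset.mem_insert_self j T')
      rw [hdot]; linarith
    · have h1 : A j ⬝ᵥ y ≥ b j := hQ y hyQ j (Finset.mem_insert_of_mem hj)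
      have h2 := hx j hj
      rw [hdot]; linarith

lemma sys_mid {n m : ℕ} (A : Fin m → Fin n → ℝ) (b : Fin m → ℝ) (S : Finset (Fin m)) :
    ∀ x ∈ sys A b S, ∀ y ∈ sys A b S, (1/2 : ℝ) • (x + y) ∈ sys A b S := by
  intro x hx y hy i hi
  have hdot : A i ⬝ᵥ ((1/2 : ℝ) • (x + y)) = (1/2) * (A i ⬝ᵥ x) + (1/2) * (A i ⬝ᵥ y) := by
    rw [dotProduct_smul, dotProduct_add, smul_eq_mul]; ring
  have := hx i hi; have := hy i hi
  rw [hdot]; linarith [hx i hi, hy i hi]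

lemma dot_lin {n m : ℕ} (A : Fin m → Fin n → ℝ) (j : Fin m) (x₀ x : Fin n → ℝ) (t : ℝ) :
    A j ⬝ᵥ (x₀ + t • (x₀ - x)) = A j ⬝ᵥ x₀ + t * (A j ⬝ᵥ x₀ - A j ⬝ᵥ x) := by
  rw [dotProduct_add, dotProduct_smul, dotProduct_sub, smul_eq_mul]

lemma face_eq_active {n m : ℕ} (A : Fin m → Fin n → ℝ) (b : Fin m → ℝ) (S : Finset (Fin m))
    (c : Fin n → ℝ) (F : Set (Fin n → ℝ))
    (hF : F = {x ∈ sys A b S | ∀ y ∈ sys A b S, c ⬝ᵥ x ≤ c ⬝ᵥ y})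
    (hFne : F.Nonempty) :
    F = {x ∈ sys A b S |
      ∀ i ∈ S.filter (fun i => ∀ z ∈ F, A i ⬝ᵥ z = b i), A i ⬝ᵥ x = b i} := by
  set P := sys A b S with hPdef
  set I := S.filter (fun i => ∀ z ∈ F, A i ⬝ᵥ z = b i) with hI
  apply Set.Subset.antisymm
  · intro x hx
    have hxP : x ∈ P := by rw [hF] at hx; exact hx.1
    refine ⟨hxP, fun i hi => ?_⟩
    exact (Finset.mem_filter.1 hi).2 x hx
  · rintro x ⟨hxP, hxI⟩
    -- midpoint-closedness of F
    have hFmid : ∀ u ∈ F, ∀ v ∈ F, (1/2 : ℝ) • (u + v) ∈ F := by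
      intro u hu v hv
      rw [hF] at hu hv ⊢
      refine ⟨sys_mid A b S u hu.1 v hv.1, fun y hy => ?_⟩
      have hd : c ⬝ᵥ ((1/2 : ℝ) • (u + v)) = (1/2) * (c ⬝ᵥ u) + (1/2) * (c ⬝ᵥ v) := by
        rw [dotProduct_smul, dotProduct_add, smul_eq_mul]; ring
      have := hu.2 y hy; have := hv.2 y hy
      rw [hd]; linarith
    have hFP : ∀ u ∈ F, u ∈ P := by intro u hu; rw [hF] at hu; exact hu.1
    -- relative interior point of F
    obtain ⟨x₀, hx₀F, hx₀⟩ := exists_strict A b F hFne hFmid (S \ I)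
      (fun u hu j hj => hFP u hu j (Finset.mem_sdiff.1 hj).1)
      (by
        intro j hj
        obtain ⟨hjS, hjI⟩ := Finset.mem_sdiff.1 hj
        rw [hI, Finset.mem_filter] at hjI
        push_neg at hjI
        obtain ⟨z, hzF, hz⟩ := hjI hjS
        exact ⟨z, hzF, lt_of_le_of_ne (hFP z hzF j hjS) (Ne.symm hz)⟩)
    have hx₀P : x₀ ∈ P := hFP x₀ hx₀F
    -- choose step size
    obtain ⟨t, ht, htle⟩ := finset_exists_pos_le (S \ I)
      (fun j => (A j ⬝ᵥ x₀ - b j) / (|A j ⬝ᵥ x₀ - A j ⬝ᵥ x| + 1))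
      (by
        intro j hj
        have h1 : 0 < A j ⬝ᵥ x₀ - b j := sub_pos.2 (hx₀ j hj)
        have h2 : 0 < |A j ⬝ᵥ x₀ - A j ⬝ᵥ x| + 1 :=
          lt_of_lt_of_le one_pos (le_add_of_nonneg_left (abs_nonneg _))
        positivity)
    set z := x₀ + t • (x₀ - x) with hz
    have hzP : z ∈ P := by
      intro j hjS
      rw [hz, dot_lin]
      by_cases hjI : j ∈ I
      · have h1 : A j ⬝ᵥ x₀ = b j := (Finset.mem_filter.1 hjI).2 x₀ hx₀F
        have h2 : A j ⬝ᵥ x = b j := hxI j hjI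
        rw [h1, h2]; simp
      · have hj : j ∈ S \ I := Finset.mem_sdiff.2 ⟨hjS, hjI⟩
        have h1 := htle j hj
        have habs : |A j ⬝ᵥ x₀ - A j ⬝ᵥ x| + 1 > 0 :=
          lt_of_lt_of_le one_pos (le_add_of_nonneg_left (abs_nonneg _))
        have h2 : t * (|A j ⬝ᵥ x₀ - A j ⬝ᵥ x| + 1) ≤ A j ⬝ᵥ x₀ - b j := by
          rw [← le_div_iff₀ habs]; exact h1
        have h3 : -(|A j ⬝ᵥ x₀ - A j ⬝ᵥ x|) ≤ A j ⬝ᵥ x₀ - A j ⬝ᵥ x := neg_abs_le _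
        nlinarith [abs_nonneg (A j ⬝ᵥ x₀ - A j ⬝ᵥ x)]
    -- conclude
    have hmin : ∀ y ∈ P, c ⬝ᵥ x₀ ≤ c ⬝ᵥ y := by
      intro y hy; rw [hF] at hx₀F; exact hx₀F.2 y hy
    have hle : c ⬝ᵥ x₀ ≤ c ⬝ᵥ z := hmin z hzP
    have hzc : c ⬝ᵥ z = c ⬝ᵥ x₀ + t * (c ⬝ᵥ x₀ - c ⬝ᵥ x) := by
      rw [hz, dotProduct_add, dotProduct_smul, dotProduct_sub, smul_eq_mul]
    have hxx₀ : c ⬝ᵥ x ≤ c ⬝ᵥ x₀ := by nlinarith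
    rw [hF]
    exact ⟨hxP, fun y hy => le_trans hxx₀ (hmin y hy)⟩

lemma pdim_nonempty {n : ℕ} {Q : Set (Fin n → ℝ)} (h : Q.Nonempty) :
    pdim Q = (Module.finrank ℝ (vectorSpan ℝ Q) : ℤ) := by
  rw [pdim, if_neg (Set.nonempty_iff_ne_empty.1 h)]

lemma dot_step {n m : ℕ} (A : Fin m → Fin n → ℝ) (j : Fin m) (z v : Fin n → ℝ) (t : ℝ) :
    A j ⬝ᵥ (z + t • v) = A j ⬝ᵥ z + t * (A j ⬝ᵥ v) := by
  rw [dotProduct_add, dotProduct_smul, smul_eq_mul]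

lemma facet_pdim {n m : ℕ} (A : Fin m → Fin n → ℝ) (b : Fin m → ℝ) (S : Finset (Fin m))
    (i : Fin m) (hiS : i ∈ S) (hne : (sys A b S).Nonempty)
    (hy : ∃ y, (∀ j ∈ S, j ≠ i → A j ⬝ᵥ y ≥ b j) ∧ A i ⬝ᵥ y < b i)
    (hstrict : ∃ x ∈ sys A b S, A i ⬝ᵥ x > b i) :
    pdim {x ∈ sys A b S | A i ⬝ᵥ x = b i} = pdim (sys A b S) - 1 := by
  classical
  set P := sys A b S with hPdef
  set Fi := {x ∈ P | A i ⬝ᵥ x = b i} with hFi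
  set E := S.filter (fun j => ∀ x ∈ P, A j ⬝ᵥ x = b j) with hE
  -- relative interior point of P
  obtain ⟨xh, hxhP, hxh⟩ := exists_strict A b P hne (sys_mid A b S) (S \ E)
    (fun x hx j hj => hx j (Finset.mem_sdiff.1 hj).1)
    (by
      intro j hj
      obtain ⟨hjS, hjE⟩ := Finset.mem_sdiff.1 hj
      rw [hE, Finset.mem_filter] at hjE
      push_neg at hjE
      obtain ⟨x, hxP, hx⟩ := hjE hjS
      exact ⟨x, hxP, lt_of_le_of_ne (hxP j hjS) (Ne.symm hx)⟩)
  have hiE : i ∉ E := by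
    obtain ⟨x, hxP, hx⟩ := hstrict
    rw [hE, Finset.mem_filter]
    push_neg
    exact fun _ => ⟨x, hxP, ne_of_gt hx⟩
  have hixh : A i ⬝ᵥ xh > b i := hxh i (Finset.mem_sdiff.2 ⟨hiS, hiE⟩)
  obtain ⟨y, hyj, hyi⟩ := hy
  -- the point z on the boundary
  set t : ℝ := (A i ⬝ᵥ xh - b i) / (A i ⬝ᵥ xh - A i ⬝ᵥ y) with htdef
  have hden : 0 < A i ⬝ᵥ xh - A i ⬝ᵥ y := by linarith
  have ht0 : 0 < t := div_pos (by linarith) hden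
  have ht1 : t < 1 := by
    rw [htdef, div_lt_one hden]; linarith
  set z := xh + t • (y - xh) with hzdef
  have hzi : A i ⬝ᵥ z = b i := by
    rw [hzdef, dotProduct_add, dotProduct_smul, dotProduct_sub, smul_eq_mul, htdef]
    field_simp
    ring
  have hzj : ∀ j ∈ S, j ≠ i → A j ⬝ᵥ z = (1 - t) * (A j ⬝ᵥ xh) + t * (A j ⬝ᵥ y) := by
    intro j _ _
    rw [hzdef, dotProduct_add, dotProduct_smul, dotProduct_sub, smul_eq_mul]; ring
  have hzP : z ∈ P := by
    intro j hjS
    by_cases hji : j = i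
    · subst hji; rw [hzi]
    · have h1 := hxhP j hjS
      have h2 := hyj j hjS hji
      rw [hzj j hjS hji]; nlinarith
  have hzFi : z ∈ Fi := ⟨hzP, hzi⟩
  have hzslack : ∀ j ∈ (S \ E).erase i, A j ⬝ᵥ z > b j := by
    intro j hj
    obtain ⟨hji, hjSE⟩ := Finset.mem_erase.1 hj
    obtain ⟨hjS, _⟩ := Finset.mem_sdiff.1 hjSE
    have h1 := hxh j hjSE
    have h2 := hyj j hjS hji
    rw [hzj j hjS hji]; nlinarith
  -- the vector space identification
  set W := vectorSpan ℝ P with hW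
  set f := dotLin (A i) with hf
  have hFiP : Fi ⊆ P := fun x hx => hx.1
  have hspan : vectorSpan ℝ Fi = W ⊓ LinearMap.ker f := by
    apply le_antisymm
    · refine le_inf (vectorSpan_mono ℝ hFiP) ?_
      have hconst : ∀ x ∈ Fi, ∀ y' ∈ Fi, A i ⬝ᵥ x = A i ⬝ᵥ y' := by
        intro x hx y' hy'; rw [hx.2, hy'.2]
      intro v hv
      simpa [hf, dotLin] using dot_vanish (A i) Fi hconst v hv
    · rintro v hv
      obtain ⟨hvW, hvker⟩ := Submodule.mem_inf.1 hv
      have hvi : A i ⬝ᵥ v = 0 := by simpa [hf, dotLin] using hvker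
      have hvE : ∀ j ∈ E, A j ⬝ᵥ v = 0 := by
        intro j hj
        rw [hE, Finset.mem_filter] at hj
        exact dot_vanish (A j) P (fun x hx y' hy' => by rw [hj.2 x hx, hj.2 y' hy']) v hvW
      obtain ⟨ε, hε, hεle⟩ := finset_exists_pos_le ((S \ E).erase i)
        (fun j => (A j ⬝ᵥ z - b j) / (|A j ⬝ᵥ v| + 1))
        (by
          intro j hj
          have h1 : 0 < A j ⬝ᵥ z - b j := sub_pos.2 (hzslack j hj)
          have h2 : 0 < |A j ⬝ᵥ v| + 1 :=
            lt_of_lt_of_le one_pos (le_add_of_nonneg_left (abs_nonneg _))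
          positivity)
      have hzv : z + ε • v ∈ Fi := by
        refine ⟨?_, by rw [dot_step, hvi]; simpa using hzi⟩
        intro j hjS
        rw [dot_step]
        by_cases hji : j = i
        · subst hji; rw [hvi, hzi]; simp
        · by_cases hjE : j ∈ E
          · rw [hvE j hjE]; simpa using hzP j hjS
          · have hj : j ∈ (S \ E).erase i :=
              Finset.mem_erase.2 ⟨hji, Finset.mem_sdiff.2 ⟨hjS, hjE⟩⟩
            have h1 := hεle j hj
            have habs : 0 < |A j ⬝ᵥ v| + 1 :=
              lt_of_lt_of_le one_pos (le_add_of_nonneg_left (abs_nonneg _))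
            have h2 : ε * (|A j ⬝ᵥ v| + 1) ≤ A j ⬝ᵥ z - b j := by
              rw [← le_div_iff₀ habs]; exact h1
            have h3 : -(|A j ⬝ᵥ v|) ≤ A j ⬝ᵥ v := neg_abs_le _
            nlinarith [abs_nonneg (A j ⬝ᵥ v)]
      have hdiff : (z + ε • v) - z ∈ vectorSpan ℝ Fi := by
        simpa using vsub_mem_vectorSpan ℝ hzv hzFi
      have : ε • v ∈ vectorSpan ℝ Fi := by simpa using hdiff
      have := (vectorSpan ℝ Fi).smul_mem ε⁻¹ this
      rwa [smul_smul, inv_mul_cancel₀ hε.ne', one_smul] at this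
  -- f is nonzero on W
  have hfW : ∃ w ∈ W, f w ≠ 0 := by
    refine ⟨xh - z, by simpa using vsub_mem_vectorSpan ℝ hxhP hzP, ?_⟩
    have : f (xh - z) = A i ⬝ᵥ xh - A i ⬝ᵥ z := by simp [hf, dotLin, dotProduct_sub]
    rw [this, hzi]
    linarith
  have hrank := finrank_inf_ker W f hfW
  rw [← hspan] at hrank
  rw [pdim_nonempty ⟨z, hzFi⟩, pdim_nonempty hne]
  rw [← hW]
  omega

theorem face_coatomistic {n : ℕ} (P F : Set (Fin n → ℝ)) (hP : IsPolyhedron P)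
    (hPne : P.Nonempty) (hF : IsFace P F) (hFne : F.Nonempty) (hFP : F ≠ P) :
    ∃ 𝓕 : Set (Set (Fin n → ℝ)), (∀ G ∈ 𝓕, IsFacet P G) ∧ F = ⋂₀ 𝓕 := by
  classical
  obtain ⟨m, A, b, hPeq⟩ := hP
  -- minimal defining subsystem
  have huniv : sys A b Finset.univ = P := by
    rw [hPeq]; ext x; simp [sys]
  set T : Finset (Finset (Fin m)) := Finset.univ.filter (fun S => sys A b S = P) with hT
  have hTne : T.Nonempty := ⟨Finset.univ, by simp [hT, huniv]⟩
  obtain ⟨S, hST, hSmin⟩ := Finset.exists_min_image T Finset.card hTne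
  have hSP : sys A b S = P := (Finset.mem_filter.1 hST).2
  -- the minimizing functional for F
  rcases hF with hFe | ⟨c, hFc⟩
  · exact absurd hFe (Set.nonempty_iff_ne_empty.1 hFne)
  rw [← hSP] at hFc
  -- active and implicit-equality index sets
  set I : Finset (Fin m) := S.filter (fun i => ∀ z ∈ F, A i ⬝ᵥ z = b i) with hI
  set E : Finset (Fin m) := S.filter (fun j => ∀ x ∈ sys A b S, A j ⬝ᵥ x = b j) with hE
  have hact := face_eq_active A b S c F hFc hFne
  rw [← hI] at hact
  set K : Finset (Fin m) := I \ E with hK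
  have hKne : K.Nonempty := by
    rw [Finset.sdiff_nonempty]
    intro hIE
    apply hFP
    apply Set.Subset.antisymm (by rw [hFc]; exact fun x hx => hSP ▸ hx.1)
    intro x hx
    rw [hact]
    refine ⟨hSP ▸ hx, fun i hi => ?_⟩
    have := hIE hi
    rw [hE, Finset.mem_filter] at this
    exact this.2 x (hSP ▸ hx)
  -- the facets
  set Fi : Fin m → Set (Fin n → ℝ) := fun i => {x ∈ P | A i ⬝ᵥ x = b i} with hFidef
  refine ⟨Fi '' (K : Set (Fin m)), ?_, ?_⟩
  · rintro G ⟨i, hiK, rfl⟩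
    have hiI : i ∈ I := (Finset.mem_sdiff.1 hiK).1
    have hiE : i ∉ E := (Finset.mem_sdiff.1 hiK).2
    have hiS : i ∈ S := (Finset.mem_filter.1 hiI).1
    have hSne : (sys A b S).Nonempty := by rw [hSP]; exact hPne
    -- a point of F is in Fi
    obtain ⟨w, hwF⟩ := hFne
    have hwP : w ∈ P := by rw [hFc] at hwF; exact hSP ▸ hwF.1
    have hwi : A i ⬝ᵥ w = b i := (Finset.mem_filter.1 hiI).2 w hwF
    have hstrict : ∃ x ∈ sys A b S, A i ⬝ᵥ x > b i := by
      rw [hE, Finset.mem_filter] at hiE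
      push_neg at hiE
      obtain ⟨x, hxP, hx⟩ := hiE hiS
      exact ⟨x, hxP, lt_of_le_of_ne (hxP i hiS) (Ne.symm hx)⟩
    constructor
    · -- IsFace
      right
      refine ⟨A i, ?_⟩
      ext x
      simp only [hFidef, Set.mem_setOf_eq, Set.mem_sep_iff]
      constructor
      · rintro ⟨hxP, hxi⟩
        exact ⟨hxP, fun y hy => hxi ▸ (hSP ▸ hy : y ∈ sys A b S) i hiS⟩
      · rintro ⟨hxP, hxmin⟩
        refine ⟨hxP, le_antisymm (hwi ▸ hxmin w hwP) ?_⟩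
        exact (hSP ▸ hxP : x ∈ sys A b S) i hiS
    · -- dimension
      have hy : ∃ y, (∀ j ∈ S, j ≠ i → A j ⬝ᵥ y ≥ b j) ∧ A i ⬝ᵥ y < b i := by
        have herase : sys A b (S.erase i) ≠ P := by
          intro heq
          have hmem : S.erase i ∈ T := by simp [hT, heq]
          have := hSmin _ hmem
          have hcard : (S.erase i).card < S.card := Finset.card_erase_lt_of_mem hiS
          omega
        have hsub : P ⊆ sys A b (S.erase i) := by
          rw [← hSP]
          intro x hx j hj
          exact hx j (Finset.mem_of_mem_erase hj)
        obtain ⟨y, hy1, hy2⟩ := Set.not_subset.1 (fun hss => herase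
          (Set.Subset.antisymm hss hsub))
        refine ⟨y, fun j hjS hji => hy1 j (Finset.mem_erase.2 ⟨hji, hjS⟩), ?_⟩
        rw [← hSP] at hy2
        simp only [sys, Set.mem_setOf_eq] at hy2
        push_neg at hy2
        obtain ⟨j, hjS, hj⟩ := hy2
        by_cases hji : j = i
        · subst hji; linarith
        · exact absurd (hy1 j (Finset.mem_erase.2 ⟨hji, hjS⟩)) (not_le.2 hj)
      have := facet_pdim A b S i hiS hSne hy hstrict
      rw [hSP] at this
      exact this
  · -- F = ⋂₀ 𝓕
    apply Set.Subset.antisymm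
    · intro x hx
      rintro G ⟨i, hiK, rfl⟩
      have hiI : i ∈ I := (Finset.mem_sdiff.1 hiK).1
      have hxP : x ∈ P := by rw [hFc] at hx; exact hSP ▸ hx.1
      exact ⟨hxP, (Finset.mem_filter.1 hiI).2 x hx⟩
    · intro x hx
      obtain ⟨i₀, hi₀K⟩ := hKne
      have hxFi₀ : x ∈ Fi i₀ := hx _ ⟨i₀, hi₀K, rfl⟩
      have hxP : x ∈ P := hxFi₀.1
      rw [hact]
      refine ⟨hSP ▸ hxP, fun i hiI => ?_⟩
      by_cases hiE : i ∈ E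
      · exact (Finset.mem_filter.1 hiE).2 x (hSP ▸ hxP)
      · have hiK : i ∈ K := Finset.mem_sdiff.2 ⟨hiI, hiE⟩
        exact (hx _ ⟨i, hiK, rfl⟩).2
end

section
/- (Balinski's theorem) Let P ⊆ ℝⁿ be a compact polyhedron of dimension n, and let V be a set of at most n−1 vertices of P. Then for any two vertices v, w of P not in V, there exists a path v = u₀, u₁, ..., u_k = w in the graph of P (consecutive uᵢ adjacent, i.e., conv{uᵢ,uᵢ₊₁} an edge of P) with no uᵢ in V. Equivalently, the vertex-edge graph of an n-dimensional polytope is n-connected. -/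
open Matrix Set
open scoped Classical

set_option linter.unusedSectionVars false
set_option maxHeartbeats 1000000

/-- A vertex of `P` is a point whose singleton is a face of `P`. -/
def IsVertex {n : ℕ} (P : Set (Fin n → ℝ)) (v : Fin n → ℝ) : Prop :=
  IsFace P {v}

/-- Two points are adjacent vertices of `P` if they are distinct and the
segment between them is an edge (a 1-dimensional face) of `P`. -/
noncomputable def Adj {n : ℕ} (P : Set (Fin n → ℝ)) (v w : Fin n → ℝ) : Prop :=
  v ≠ w ∧ IsFace P (segment ℝ v w) ∧ pdim (segment ℝ v w) = 1

namespace BalinskiAux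

variable {n : ℕ}

lemma sum_dot {ι : Type*} (s : Finset ι) (u : ι → Fin n → ℝ) (x : Fin n → ℝ) :
    (∑ i ∈ s, u i) ⬝ᵥ x = ∑ i ∈ s, u i ⬝ᵥ x := by
  simp [dotProduct, Finset.sum_apply, Finset.sum_mul]
  exact Finset.sum_comm

lemma dot_continuous (f : Fin n → ℝ) : Continuous fun x : Fin n → ℝ => f ⬝ᵥ x := by
  classical
  have h : (fun x : Fin n → ℝ => f ⬝ᵥ x) = fun x => ∑ i, f i * x i := rfl
  rw [h]
  exact continuous_finset_sum _ fun i _ => (continuous_const.mul (continuous_apply i))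

section Gen

variable {ι : Type*} [Fintype ι] (B : ι → Fin n → ℝ) (c : ι → ℝ)

lemma convex_Q : Convex ℝ {x : Fin n → ℝ | ∀ i, B i ⬝ᵥ x ≥ c i} := by
  have h : {x : Fin n → ℝ | ∀ i, B i ⬝ᵥ x ≥ c i} = ⋂ i, {x | c i ≤ B i ⬝ᵥ x} := by
    ext x; simp [Set.mem_iInter, ge_iff_le]
  rw [h]
  exact convex_iInter fun i => convex_halfSpace_ge
    ⟨fun x y => dotProduct_add (B i) x y, fun c x => by simp [dotProduct_smul]⟩ (c i)

lemma closed_Q : IsClosed {x : Fin n → ℝ | ∀ i, B i ⬝ᵥ x ≥ c i} := by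
  have h : {x : Fin n → ℝ | ∀ i, B i ⬝ᵥ x ≥ c i} = ⋂ i, {x | c i ≤ B i ⬝ᵥ x} := by
    ext x; simp [Set.mem_iInter, ge_iff_le]
  rw [h]
  exact isClosed_iInter fun i => IsClosed.preimage (dot_continuous (B i)) isClosed_Ici

def SharpAt (x : Fin n → ℝ) : Prop :=
  ∀ z : Fin n → ℝ, (∀ i, B i ⬝ᵥ x = c i → B i ⬝ᵥ z = 0) → z = 0

lemma exists_eps {x : Fin n → ℝ} (hx : ∀ i, B i ⬝ᵥ x ≥ c i) (z : Fin n → ℝ)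
    (hz : ∀ i, B i ⬝ᵥ x = c i → B i ⬝ᵥ z = 0) :
    ∃ ε : ℝ, 0 < ε ∧ (∀ i, B i ⬝ᵥ (x + ε • z) ≥ c i) ∧ (∀ i, B i ⬝ᵥ (x - ε • z) ≥ c i) := by
  classical
  set g : ι → ℝ := fun i => if B i ⬝ᵥ x = c i then 1 else (B i ⬝ᵥ x - c i) / (|B i ⬝ᵥ z| + 1)
    with hg
  have hgpos : ∀ i, 0 < g i := by
    intro i; by_cases h : B i ⬝ᵥ x = c i
    · simp [hg, h]
    · have h1 : c i < B i ⬝ᵥ x := lt_of_le_of_ne (hx i) (Ne.symm h)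
      have h2 : (0:ℝ) < |B i ⬝ᵥ z| + 1 := by positivity
      simp only [hg, if_neg h]
      exact div_pos (by linarith) h2
  obtain ⟨ε, hε, hεg⟩ : ∃ ε : ℝ, 0 < ε ∧ ∀ i, ε ≤ g i := by
    cases isEmpty_or_nonempty ι with
    | inl h => exact ⟨1, one_pos, fun i => (h.elim i)⟩
    | inr h =>
      refine ⟨Finset.univ.inf' ⟨Classical.arbitrary ι, Finset.mem_univ _⟩ g, ?_, ?_⟩
      · exact (Finset.lt_inf'_iff _).2 fun i _ => hgpos i
      · exact fun i => Finset.inf'_le g (Finset.mem_univ i)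
  have bound : ∀ i, ε * |B i ⬝ᵥ z| ≤ B i ⬝ᵥ x - c i := by
    intro i
    by_cases h : B i ⬝ᵥ x = c i
    · simp [hz i h, h]
    · have h2 : (0:ℝ) < |B i ⬝ᵥ z| + 1 := by positivity
      have := hεg i
      rw [hg] at this; simp only [if_neg h] at this
      calc ε * |B i ⬝ᵥ z| ≤ ((B i ⬝ᵥ x - c i) / (|B i ⬝ᵥ z| + 1)) * (|B i ⬝ᵥ z| + 1) := by
            apply mul_le_mul this (by linarith [abs_nonneg (B i ⬝ᵥ z)]) (abs_nonneg _)
            · exact le_of_lt (lt_of_lt_of_le hε this)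
        _ = B i ⬝ᵥ x - c i := div_mul_cancel₀ _ (ne_of_gt h2)
  refine ⟨ε, hε, fun i => ?_, fun i => ?_⟩ <;>
  · have habs : |ε * (B i ⬝ᵥ z)| ≤ B i ⬝ᵥ x - c i := by
      rw [abs_mul, abs_of_pos hε]; exact bound i
    have h1 := abs_le.1 habs
    simp only [dotProduct_add, dotProduct_sub, dotProduct_smul, smul_eq_mul, ge_iff_le]
    linarith [h1.1, h1.2]

lemma extreme_sharpAt {x : Fin n → ℝ}
    (hx : x ∈ Set.extremePoints ℝ {y : Fin n → ℝ | ∀ i, B i ⬝ᵥ y ≥ c i}) : SharpAt B c x := by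
  intro z hz
  by_contra hz0
  obtain ⟨hxQ, hext⟩ := hx
  obtain ⟨ε, hε, h1, h2⟩ := exists_eps B c hxQ z hz
  have hmem : x ∈ openSegment ℝ (x + ε • z) (x - ε • z) := by
    rw [openSegment_eq_image]
    refine ⟨1/2, by norm_num, ?_⟩
    ext j; simp; ring
  have := hext h1 h2 hmem
  have hz' : ε • z = 0 := by
    have h := this
    have : x + ε • z = x := h
    exact add_eq_left.mp this
  rcases smul_eq_zero.1 hz' with h | h
  · exact absurd h (ne_of_gt hε)
  · exact hz0 h

lemma sharpAt_vertex {x : Fin n → ℝ} (hx : ∀ i, B i ⬝ᵥ x ≥ c i) (hs : SharpAt B c x) :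
    IsVertex {y : Fin n → ℝ | ∀ i, B i ⬝ᵥ y ≥ c i} x := by
  classical
  set T := Finset.univ.filter (fun i => B i ⬝ᵥ x = c i) with hT
  refine Or.inr ⟨(∑ i ∈ T, B i), ?_⟩
  have hdot : ∀ y, (∑ i ∈ T, B i) ⬝ᵥ y = ∑ i ∈ T, B i ⬝ᵥ y := fun y => sum_dot ..
  ext y
  simp only [Set.mem_singleton_iff, Set.mem_setOf_eq]
  constructor
  · rintro rfl
    refine ⟨hx, fun z hz => ?_⟩
    rw [hdot, hdot]
    refine Finset.sum_le_sum fun i hi => ?_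
    rw [(Finset.mem_filter.1 hi).2]; exact hz i
  · rintro ⟨hyQ, hmin⟩
    have h1 : ∑ i ∈ T, B i ⬝ᵥ y ≤ ∑ i ∈ T, B i ⬝ᵥ x := by
      have := hmin x hx; rw [hdot, hdot] at this; exact this
    have h2 : ∀ i ∈ T, B i ⬝ᵥ x ≤ B i ⬝ᵥ y := fun i hi => by
      rw [(Finset.mem_filter.1 hi).2]; exact hyQ i
    have heq : ∀ i ∈ T, B i ⬝ᵥ y = B i ⬝ᵥ x := by
      intro i hi
      by_contra hne
      have hlt : B i ⬝ᵥ x < B i ⬝ᵥ y := lt_of_le_of_ne (h2 i hi) (Ne.symm hne)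
      have : ∑ j ∈ T, B j ⬝ᵥ x < ∑ j ∈ T, B j ⬝ᵥ y := Finset.sum_lt_sum h2 ⟨i, hi, hlt⟩
      linarith
    have hz := hs (y - x) (fun i hi => by
      have himem : i ∈ T := Finset.mem_filter.2 ⟨Finset.mem_univ _, hi⟩
      rw [dotProduct_sub, heq i himem, sub_self])
    exact sub_eq_zero.1 hz

lemma vertex_mem {P : Set (Fin n → ℝ)} {v : Fin n → ℝ} (hv : IsVertex P v) : v ∈ P := by
  rcases hv with h | ⟨c, hc⟩
  · exact absurd h (Set.singleton_ne_empty v)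
  · have : v ∈ ({v} : Set (Fin n → ℝ)) := rfl
    rw [hc] at this; exact this.1

lemma vertex_min {P : Set (Fin n → ℝ)} {v : Fin n → ℝ} (hv : IsVertex P v) :
    ∃ f : Fin n → ℝ, (∀ y ∈ P, f ⬝ᵥ v ≤ f ⬝ᵥ y) ∧
      ∀ x ∈ P, (∀ y ∈ P, f ⬝ᵥ x ≤ f ⬝ᵥ y) → x = v := by
  rcases hv with h | ⟨c, hc⟩
  · exact absurd h (Set.singleton_ne_empty v)
  · have hvv : v ∈ ({v} : Set (Fin n → ℝ)) := rfl
    rw [hc] at hvv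
    exact ⟨c, hvv.2, fun x hx hmin => by
      have : x ∈ ({v} : Set (Fin n → ℝ)) := by rw [hc]; exact ⟨hx, hmin⟩
      exact this⟩

lemma vertex_sharpAt {x : Fin n → ℝ}
    (hv : IsVertex {y : Fin n → ℝ | ∀ i, B i ⬝ᵥ y ≥ c i} x) : SharpAt B c x := by
  have hxQ : ∀ i, B i ⬝ᵥ x ≥ c i := vertex_mem hv
  obtain ⟨f, hmin, huniq⟩ := vertex_min hv
  intro z hz
  obtain ⟨ε, hε, h1, h2⟩ := exists_eps B c hxQ z hz
  have e1 : f ⬝ᵥ x ≤ f ⬝ᵥ (x + ε • z) := hmin _ h1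
  have e2 : f ⬝ᵥ x ≤ f ⬝ᵥ (x - ε • z) := hmin _ h2
  have esum : f ⬝ᵥ (x + ε • z) + f ⬝ᵥ (x - ε • z) = 2 * (f ⬝ᵥ x) := by
    rw [dotProduct_add, dotProduct_sub]; ring
  have e3 : f ⬝ᵥ (x + ε • z) = f ⬝ᵥ x := by linarith
  have : x + ε • z = x := huniq _ h1 (fun y hy => e3 ▸ hmin y hy)
  have hz' : ε • z = 0 := add_eq_left.mp this
  rcases smul_eq_zero.1 hz' with h | h
  · exact absurd h (ne_of_gt hε)
  · exact h

end Gen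

lemma vertices_finite {m : ℕ} (A : Fin m → Fin n → ℝ) (b : Fin m → ℝ) :
    {v | IsVertex {x : Fin n → ℝ | ∀ i, A i ⬝ᵥ x ≥ b i} v}.Finite := by
  classical
  have hinj : Set.InjOn (fun v => Finset.univ.filter (fun i => A i ⬝ᵥ v = b i))
      {v | IsVertex {x : Fin n → ℝ | ∀ i, A i ⬝ᵥ x ≥ b i} v} := by
    intro v hv w hw hvw
    have hsv : SharpAt A b v := vertex_sharpAt A b hv
    have : v - w = 0 := hsv (v - w) (fun i hi => by
      have h1 : i ∈ Finset.univ.filter (fun i => A i ⬝ᵥ v = b i) :=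
        Finset.mem_filter.2 ⟨Finset.mem_univ _, hi⟩
      have hvw' : Finset.univ.filter (fun i => A i ⬝ᵥ v = b i)
          = Finset.univ.filter (fun i => A i ⬝ᵥ w = b i) := hvw
      rw [hvw'] at h1
      have h2 : A i ⬝ᵥ w = b i := (Finset.mem_filter.1 h1).2
      rw [dotProduct_sub, hi, h2, sub_self])
    exact sub_eq_zero.1 this
  exact Set.Finite.of_finite_image (Set.toFinite _) hinj

lemma extreme_of_argmin {Q : Set (Fin n → ℝ)} {g x : Fin n → ℝ}
    (hx : x ∈ Set.extremePoints ℝ {z ∈ Q | ∀ y ∈ Q, g ⬝ᵥ z ≤ g ⬝ᵥ y}) :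
    x ∈ Set.extremePoints ℝ Q := by
  obtain ⟨⟨hxQ, hxmin⟩, hext⟩ := hx
  refine ⟨hxQ, fun x₁ hx₁ x₂ hx₂ hseg => ?_⟩
  obtain ⟨a, bb, ha, hb, hab, hsum⟩ := hseg
  have hgx : g ⬝ᵥ x = a * (g ⬝ᵥ x₁) + bb * (g ⬝ᵥ x₂) := by
    rw [← hsum, dotProduct_add, dotProduct_smul, dotProduct_smul]; rfl
  have e1 : g ⬝ᵥ x ≤ g ⬝ᵥ x₁ := hxmin x₁ hx₁
  have e2 : g ⬝ᵥ x ≤ g ⬝ᵥ x₂ := hxmin x₂ hx₂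
  have hkey : a * (g ⬝ᵥ x₁ - g ⬝ᵥ x) + bb * (g ⬝ᵥ x₂ - g ⬝ᵥ x) = 0 := by
    linear_combination (-1 : ℝ) * hgx - (g ⬝ᵥ x) * hab
  have t1 : 0 ≤ a * (g ⬝ᵥ x₁ - g ⬝ᵥ x) := mul_nonneg ha.le (by linarith)
  have t2 : 0 ≤ bb * (g ⬝ᵥ x₂ - g ⬝ᵥ x) := mul_nonneg hb.le (by linarith)
  have q1 : g ⬝ᵥ x₁ = g ⬝ᵥ x := by
    have h0 : a * (g ⬝ᵥ x₁ - g ⬝ᵥ x) = 0 := by linarith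
    rcases mul_eq_zero.1 h0 with h | h
    · exact absurd h (ne_of_gt ha)
    · linarith
  have q2 : g ⬝ᵥ x₂ = g ⬝ᵥ x := by
    have h0 : bb * (g ⬝ᵥ x₂ - g ⬝ᵥ x) = 0 := by linarith
    rcases mul_eq_zero.1 h0 with h | h
    · exact absurd h (ne_of_gt hb)
    · linarith
  exact hext ⟨hx₁, fun y hy => q1 ▸ hxmin y hy⟩ ⟨hx₂, fun y hy => q2 ▸ hxmin y hy⟩
    ⟨a, bb, ha, hb, hab, hsum⟩

lemma pdim_segment {v w : Fin n → ℝ} (h : v ≠ w) : pdim (segment ℝ v w) = 1 := by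
  have hne : segment ℝ v w ≠ ∅ := Set.Nonempty.ne_empty ⟨v, left_mem_segment ℝ v w⟩
  rw [pdim, if_neg hne]
  norm_cast
  have hvs : vectorSpan ℝ (segment ℝ v w) = ℝ ∙ (w - v) := by
    apply le_antisymm
    · rw [vectorSpan, Submodule.span_le]
      rintro p hp
      rw [Set.mem_vsub] at hp
      obtain ⟨x, hx, y, hy, rfl⟩ := hp
      rw [segment_eq_image'] at hx hy
      obtain ⟨θ₁, _, rfl⟩ := hx
      obtain ⟨θ₂, _, rfl⟩ := hy
      rw [SetLike.mem_coe, Submodule.mem_span_singleton]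
      exact ⟨θ₁ - θ₂, by ext j; simp [vsub_eq_sub]; ring⟩
    · rw [Submodule.span_singleton_le_iff_mem]
      exact vsub_mem_vectorSpan ℝ (right_mem_segment ℝ v w) (left_mem_segment ℝ v w)
  rw [hvs, finrank_span_singleton (sub_ne_zero.2 (Ne.symm h))]

section Pivot

variable {m : ℕ} (A : Fin m → Fin n → ℝ) (b : Fin m → ℝ)

lemma sum_tight_eq_zero {T : Finset (Fin m)} {x : Fin n → ℝ}
    (hge : ∀ i ∈ T, b i ≤ A i ⬝ᵥ x) (hsum : ∑ i ∈ T, A i ⬝ᵥ x ≤ ∑ i ∈ T, b i) :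
    ∀ i ∈ T, A i ⬝ᵥ x = b i := by
  intro i hi
  by_contra hne
  have hlt : b i < A i ⬝ᵥ x := lt_of_le_of_ne (hge i hi) (Ne.symm hne)
  have : ∑ j ∈ T, b j < ∑ j ∈ T, A j ⬝ᵥ x := Finset.sum_lt_sum hge ⟨i, hi, hlt⟩
  linarith

/-- The key pivot lemma: from a vertex which does not minimize `f`, we can move along
an edge to an adjacent vertex with strictly smaller `f`-value. -/
lemma pivot (hc : IsCompact {x : Fin n → ℝ | ∀ i, A i ⬝ᵥ x ≥ b i})
    {v : Fin n → ℝ} (hv : IsVertex {x : Fin n → ℝ | ∀ i, A i ⬝ᵥ x ≥ b i} v)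
    {f y : Fin n → ℝ} (hyP : ∀ i, A i ⬝ᵥ y ≥ b i) (hy : f ⬝ᵥ y < f ⬝ᵥ v) :
    ∃ w, IsVertex {x : Fin n → ℝ | ∀ i, A i ⬝ᵥ x ≥ b i} w ∧
      Adj {x : Fin n → ℝ | ∀ i, A i ⬝ᵥ x ≥ b i} v w ∧ f ⬝ᵥ w < f ⬝ᵥ v := by
  classical
  set P : Set (Fin n → ℝ) := {x | ∀ i, A i ⬝ᵥ x ≥ b i} with hP
  have hvP : ∀ i, A i ⬝ᵥ v ≥ b i := vertex_mem hv
  have hsharp : SharpAt A b v := vertex_sharpAt A b hv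
  set T : Finset (Fin m) := Finset.univ.filter (fun i => A i ⬝ᵥ v = b i) with hT
  set e : Fin n → ℝ := ∑ i ∈ T, A i with he
  have edot : ∀ d, e ⬝ᵥ d = ∑ i ∈ T, A i ⬝ᵥ d := fun d => sum_dot ..
  -- the tangent cone facts
  have epos : ∀ d : Fin n → ℝ, (∀ i, A i ⬝ᵥ v = b i → 0 ≤ A i ⬝ᵥ d) →
      0 ≤ e ⬝ᵥ d ∧ (e ⬝ᵥ d = 0 → d = 0) := by
    intro d hd
    have hterm : ∀ i ∈ T, 0 ≤ A i ⬝ᵥ d := fun i hi => hd i (Finset.mem_filter.1 hi).2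
    constructor
    · rw [edot]; exact Finset.sum_nonneg hterm
    · intro h0
      rw [edot] at h0
      have hz := (Finset.sum_eq_zero_iff_of_nonneg hterm).1 h0
      exact hsharp d fun i hi => hz i (Finset.mem_filter.2 ⟨Finset.mem_univ _, hi⟩)
  -- the improving direction cone element
  set d₀ : Fin n → ℝ := y - v with hd₀
  have hd₀C : ∀ i, A i ⬝ᵥ v = b i → 0 ≤ A i ⬝ᵥ d₀ := fun i hi => by
    rw [hd₀, dotProduct_sub, hi]; linarith [hyP i]
  have fd₀ : f ⬝ᵥ d₀ < 0 := by rw [hd₀, dotProduct_sub]; linarith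
  have hd₀0 : d₀ ≠ 0 := fun h => by rw [h, dotProduct_zero] at fd₀; linarith
  have ed₀ : 0 < e ⬝ᵥ d₀ := by
    obtain ⟨h1, h2⟩ := epos d₀ hd₀C
    rcases h1.lt_or_eq with h | h
    · exact h
    · exact absurd (h2 h.symm) hd₀0
  -- the polyhedron of directions
  set B : (Fin m ⊕ Bool) → Fin n → ℝ :=
    Sum.elim (fun i => if A i ⬝ᵥ v = b i then A i else 0)
      (fun s => if s then e else -e) with hB
  set cc : (Fin m ⊕ Bool) → ℝ := Sum.elim (fun _ => 0) (fun s => if s then 1 else -1) with hcc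
  set D : Set (Fin n → ℝ) := {d | ∀ j, B j ⬝ᵥ d ≥ cc j} with hD
  have memD : ∀ d, d ∈ D ↔ ((∀ i, A i ⬝ᵥ v = b i → 0 ≤ A i ⬝ᵥ d) ∧ e ⬝ᵥ d = 1) := by
    intro d
    constructor
    · intro hd
      refine ⟨fun i hi => by have := hd (Sum.inl i); simpa [hB, hcc, hi] using this, ?_⟩
      have h1 := hd (Sum.inr true)
      have h2 := hd (Sum.inr false)
      simp [hB, hcc, neg_dotProduct] at h1 h2
      linarith
    · rintro ⟨h1, h2⟩ j
      rcases j with i | s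
      · by_cases hi : A i ⬝ᵥ v = b i
        · simpa [hB, hcc, hi] using h1 i hi
        · simp [hB, hcc, hi]
      · rcases s with _ | _ <;> simp [hB, hcc, neg_dotProduct, h2]
  -- normalized direction
  set d₁ : Fin n → ℝ := (e ⬝ᵥ d₀)⁻¹ • d₀ with hd₁
  have hd₁D : d₁ ∈ D := by
    rw [memD]
    constructor
    · intro i hi
      rw [hd₁, dotProduct_smul, smul_eq_mul]
      exact mul_nonneg (inv_nonneg.2 ed₀.le) (hd₀C i hi)
    · rw [hd₁, dotProduct_smul, smul_eq_mul, inv_mul_cancel₀ (ne_of_gt ed₀)]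
  have fd₁ : f ⬝ᵥ d₁ < 0 := by
    rw [hd₁, dotProduct_smul, smul_eq_mul]
    exact mul_neg_of_pos_of_neg (inv_pos.2 ed₀) fd₀
  -- the cone is pointed, giving a bound for D
  have hDbdd : ∃ R : ℝ, 0 < R ∧ ∀ d ∈ D, ‖d‖ ≤ R := by
    set CC : Set (Fin n → ℝ) := {d | ∀ i, A i ⬝ᵥ v = b i → 0 ≤ A i ⬝ᵥ d} with hCC
    have hCCclosed : IsClosed CC := by
      have : CC = ⋂ i, {d : Fin n → ℝ | A i ⬝ᵥ v = b i → 0 ≤ A i ⬝ᵥ d} := by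
        ext d; simp [hCC, Set.mem_iInter]
      rw [this]
      refine isClosed_iInter fun i => ?_
      by_cases hi : A i ⬝ᵥ v = b i
      · have : {d : Fin n → ℝ | A i ⬝ᵥ v = b i → 0 ≤ A i ⬝ᵥ d}
            = {d : Fin n → ℝ | 0 ≤ A i ⬝ᵥ d} := by ext d; simp [hi]
        rw [this]
        exact IsClosed.preimage (dot_continuous (A i)) isClosed_Ici
      · have : {d : Fin n → ℝ | A i ⬝ᵥ v = b i → 0 ≤ A i ⬝ᵥ d} = Set.univ := by
          ext d; simp [hi]
        rw [this]; exact isClosed_univ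
    have hCCsmul : ∀ (t : ℝ), 0 ≤ t → ∀ d ∈ CC, t • d ∈ CC := by
      intro t ht d hd i hi
      rw [dotProduct_smul, smul_eq_mul]
      exact mul_nonneg ht (hd i hi)
    set K : Set (Fin n → ℝ) := CC ∩ Metric.sphere 0 1 with hK
    have hKcomp : IsCompact K := (isCompact_sphere (0 : Fin n → ℝ) 1).inter_left hCCclosed
    have hKne : K.Nonempty := by
      refine ⟨‖d₀‖⁻¹ • d₀, hCCsmul _ (inv_nonneg.2 (norm_nonneg _)) _ hd₀C, ?_⟩
      rw [mem_sphere_zero_iff_norm, norm_smul, norm_inv, norm_norm,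
        inv_mul_cancel₀ (norm_ne_zero_iff.2 hd₀0)]
    obtain ⟨k₀, hk₀K, hk₀min⟩ := hKcomp.exists_isMinOn hKne (dot_continuous e).continuousOn
    set δ : ℝ := e ⬝ᵥ k₀ with hδ
    have hδpos : 0 < δ := by
      obtain ⟨hk₀CC, hk₀S⟩ := hk₀K
      obtain ⟨h1, h2⟩ := epos k₀ hk₀CC
      rcases h1.lt_or_eq with h | h
      · exact h
      · exfalso
        have : k₀ = 0 := h2 h.symm
        rw [mem_sphere_zero_iff_norm, this, norm_zero] at hk₀S
        norm_num at hk₀S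
    refine ⟨δ⁻¹, inv_pos.2 hδpos, fun d hd => ?_⟩
    rcases eq_or_ne d 0 with rfl | hd0
    · simp [inv_nonneg.2 hδpos.le]
    · have hu : ‖d‖⁻¹ • d ∈ K := by
        refine ⟨hCCsmul _ (inv_nonneg.2 (norm_nonneg _)) _ ((memD d).1 hd).1, ?_⟩
        rw [mem_sphere_zero_iff_norm, norm_smul, norm_inv, norm_norm,
          inv_mul_cancel₀ (norm_ne_zero_iff.2 hd0)]
      have h1 : δ ≤ e ⬝ᵥ (‖d‖⁻¹ • d) := isMinOn_iff.1 hk₀min _ hu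
      rw [dotProduct_smul, smul_eq_mul, ((memD d).1 hd).2, mul_one] at h1
      have hnd : 0 < ‖d‖ := norm_pos_iff.2 hd0
      rw [← one_div, le_div_iff₀ hnd] at h1
      rw [← one_div, le_div_iff₀ hδpos, mul_comm]
      exact h1
  obtain ⟨R, hRpos, hRbound⟩ := hDbdd
  have hDclosed : IsClosed D := closed_Q B cc
  have hDcomp : IsCompact D := by
    refine (isCompact_closedBall (0 : Fin n → ℝ) R).of_isClosed_subset hDclosed ?_
    intro d hd
    rw [Metric.mem_closedBall, dist_zero_right]
    exact hRbound d hd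
  -- minimize f over D, get extreme point of the argmin face
  have hDne : D.Nonempty := ⟨d₁, hd₁D⟩
  set Dmin : Set (Fin n → ℝ) := {z ∈ D | ∀ y ∈ D, f ⬝ᵥ z ≤ f ⬝ᵥ y} with hDmin
  obtain ⟨dm, hdmD, hdmmin⟩ := hDcomp.exists_isMinOn hDne (dot_continuous f).continuousOn
  have hDminne : Dmin.Nonempty := ⟨dm, hdmD, fun y hy => isMinOn_iff.1 hdmmin _ hy⟩
  have hDmineq : Dmin = D ∩ {z | f ⬝ᵥ z ≤ f ⬝ᵥ dm} := by
    ext z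
    constructor
    · rintro ⟨hz, hmin⟩; exact ⟨hz, hmin dm hdmD⟩
    · rintro ⟨hz, hle⟩; exact ⟨hz, fun y hy => le_trans hle (isMinOn_iff.1 hdmmin _ hy)⟩
  have hDmincomp : IsCompact Dmin := by
    rw [hDmineq]
    exact hDcomp.inter_right (IsClosed.preimage (dot_continuous f) isClosed_Iic)
  obtain ⟨ds, hds⟩ := hDmincomp.extremePoints_nonempty hDminne
  have hdsD : ds ∈ Set.extremePoints ℝ D := extreme_of_argmin hds
  have hdsDmem : ds ∈ Dmin := hds.1
  obtain ⟨hdsCC, hdse⟩ := (memD ds).1 hdsDmem.1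
  have fds : f ⬝ᵥ ds < 0 := lt_of_le_of_lt (hdsDmem.2 d₁ hd₁D) fd₁
  have hds0 : ds ≠ 0 := fun h => by rw [h, dotProduct_zero] at fds; linarith
  -- sharpness for ds in the direction polyhedron
  have sharpds := extreme_sharpAt B cc hdsD
  have key : ∀ z : Fin n → ℝ,
      (∀ i, A i ⬝ᵥ v = b i → A i ⬝ᵥ ds = 0 → A i ⬝ᵥ z = 0) → e ⬝ᵥ z = 0 → z = 0 := by
    intro z hz hez
    refine sharpds z fun j hj => ?_
    rcases j with i | s
    · by_cases hi : A i ⬝ᵥ v = b i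
      · simp only [hB, hcc, Sum.elim_inl, if_pos hi] at hj ⊢
        exact hz i hi hj
      · simp [hB, hi]
    · rcases s with _ | _
      · simp [hB, hcc, neg_dotProduct, hez]
      · simp [hB, hcc, hez]
  have Kspan : ∀ z : Fin n → ℝ,
      (∀ i, A i ⬝ᵥ v = b i → A i ⬝ᵥ ds = 0 → A i ⬝ᵥ z = 0) → ∃ t : ℝ, z = t • ds := by
    intro z hz
    have h0 : z - (e ⬝ᵥ z) • ds = 0 := by
      refine key _ (fun i hi hids => ?_) ?_
      · rw [dotProduct_sub, hz i hi hids, dotProduct_smul, smul_eq_mul, hids, mul_zero, sub_zero]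
      · rw [dotProduct_sub, dotProduct_smul, smul_eq_mul, hdse, mul_one, sub_self]
    exact ⟨e ⬝ᵥ z, by rw [← sub_eq_zero]; exact h0⟩
  -- a tight row with positive product
  have ex_i1 : ∃ i, A i ⬝ᵥ v = b i ∧ 0 < A i ⬝ᵥ ds := by
    by_contra h
    push_neg at h
    have hzero : ∀ i ∈ T, A i ⬝ᵥ ds = 0 := fun i hi => by
      have h1 := hdsCC i (Finset.mem_filter.1 hi).2
      have h2 := h i (Finset.mem_filter.1 hi).2
      linarith
    rw [edot, Finset.sum_eq_zero hzero] at hdse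
    norm_num at hdse
  obtain ⟨i₁, hi₁T, hi₁pos⟩ := ex_i1
  -- step lemma
  have step : ∀ x : Fin n → ℝ, (∀ i, A i ⬝ᵥ x ≥ b i) →
      (∀ i, A i ⬝ᵥ x = b i → 0 ≤ A i ⬝ᵥ ds) →
      ∃ ε : ℝ, 0 < ε ∧ ∀ i, A i ⬝ᵥ (x + ε • ds) ≥ b i := by
    intro x hx hxd
    set g : Fin m → ℝ := fun i =>
      if 0 ≤ A i ⬝ᵥ ds then 1 else (A i ⬝ᵥ x - b i) / (-(A i ⬝ᵥ ds)) with hg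
    have hgpos : ∀ i, 0 < g i := by
      intro i
      by_cases hi : 0 ≤ A i ⬝ᵥ ds
      · simp [hg, hi]
      · push_neg at hi
        have hnt : b i < A i ⬝ᵥ x := by
          rcases (hx i).lt_or_eq with h | h
          · exact h
          · exact absurd (hxd i h.symm) (not_le.2 hi)
        simp only [hg, if_neg (not_le.2 hi)]
        exact div_pos (by linarith) (by linarith)
    obtain ⟨ε, hε, hεg⟩ : ∃ ε : ℝ, 0 < ε ∧ ∀ i, ε ≤ g i := by
      cases isEmpty_or_nonempty (Fin m) with
      | inl h => exact ⟨1, one_pos, fun i => (h.elim i)⟩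
      | inr h =>
        refine ⟨Finset.univ.inf' ⟨Classical.arbitrary (Fin m), Finset.mem_univ _⟩ g, ?_, ?_⟩
        · exact (Finset.lt_inf'_iff _).2 fun i _ => hgpos i
        · exact fun i => Finset.inf'_le g (Finset.mem_univ i)
    refine ⟨ε, hε, fun i => ?_⟩
    rw [dotProduct_add, dotProduct_smul, smul_eq_mul, ge_iff_le]
    by_cases hi : 0 ≤ A i ⬝ᵥ ds
    · have : 0 ≤ ε * (A i ⬝ᵥ ds) := mul_nonneg hε.le hi
      linarith [hx i]
    · push_neg at hi
      have h1 := hεg i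
      rw [hg] at h1
      simp only [if_neg (not_le.2 hi)] at h1
      have h2 : ε * (-(A i ⬝ᵥ ds)) ≤ A i ⬝ᵥ x - b i := by
        rw [← le_div_iff₀ (by linarith : (0:ℝ) < -(A i ⬝ᵥ ds))]
        exact h1
      linarith
  -- maximal step length
  set TT : Set ℝ := {t : ℝ | 0 ≤ t ∧ ∀ i, A i ⬝ᵥ (v + t • ds) ≥ b i} with hTT
  have hTTclosed : IsClosed TT := by
    have : TT = {t : ℝ | 0 ≤ t} ∩ (fun t : ℝ => v + t • ds) ⁻¹' P := by
      ext t; simp [hTT, hP, Set.mem_setOf_eq]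
    rw [this]
    refine IsClosed.inter isClosed_Ici (IsClosed.preimage ?_ (closed_Q A b))
    exact continuous_const.add (continuous_id.smul continuous_const)
  have hTTne : TT.Nonempty := ⟨0, le_refl 0, by simpa using hvP⟩
  have hds_norm : 0 < ‖ds‖ := norm_pos_iff.2 hds0
  obtain ⟨RP, hRP⟩ := hc.isBounded.exists_norm_le
  have hTTbdd : BddAbove TT := by
    refine ⟨(RP + ‖v‖) / ‖ds‖, fun t ht => ?_⟩
    obtain ⟨ht0, htP⟩ := ht
    have h1 : ‖v + t • ds‖ ≤ RP := hRP _ htP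
    have h2 : ‖t • ds‖ ≤ RP + ‖v‖ := by
      calc ‖t • ds‖ = ‖(v + t • ds) - v‖ := by congr 1; abel
        _ ≤ ‖v + t • ds‖ + ‖v‖ := norm_sub_le _ _
        _ ≤ RP + ‖v‖ := by linarith
    rw [norm_smul, Real.norm_eq_abs, abs_of_nonneg ht0] at h2
    rw [le_div_iff₀ hds_norm]
    exact h2
  set ts : ℝ := sSup TT with hts
  have htsTT : ts ∈ TT := hTTclosed.csSup_mem hTTne hTTbdd
  have htspos : 0 < ts := by
    obtain ⟨ε, hε, hεP⟩ := step v hvP (fun i hi => hdsCC i hi)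
    have : ε ∈ TT := ⟨hε.le, hεP⟩
    exact lt_of_lt_of_le hε (le_csSup hTTbdd this)
  set w : Fin n → ℝ := v + ts • ds with hw
  have hwP : ∀ i, A i ⬝ᵥ w ≥ b i := htsTT.2
  have hvw : v ≠ w := by
    intro h
    have : ts • ds = 0 := by
      have := congrArg (· - v) h
      simpa [hw] using this.symm
    rcases smul_eq_zero.1 this with h' | h'
    · exact absurd h' (ne_of_gt htspos)
    · exact hds0 h'
  -- a row that blocks further movement
  have ex_i2 : ∃ i, A i ⬝ᵥ w = b i ∧ A i ⬝ᵥ ds < 0 := by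
    by_contra h
    push_neg at h
    obtain ⟨ε, hε, hεP⟩ := step w hwP (fun i hi => h i hi)
    have hmem : ts + ε ∈ TT := by
      refine ⟨by linarith, fun i => ?_⟩
      have := hεP i
      rw [hw] at this
      calc b i ≤ A i ⬝ᵥ (v + ts • ds + ε • ds) := this
        _ = A i ⬝ᵥ (v + (ts + ε) • ds) := by rw [add_smul]; ring_nf
    have : ts + ε ≤ ts := le_csSup hTTbdd hmem
    linarith
  obtain ⟨i₂, hi₂w, hi₂neg⟩ := ex_i2
  -- tight rows at v with zero product stay tight at w
  have tightw : ∀ i, A i ⬝ᵥ v = b i → A i ⬝ᵥ ds = 0 → A i ⬝ᵥ w = b i := by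
    intro i hi hids
    rw [hw, dotProduct_add, dotProduct_smul, smul_eq_mul, hids, mul_zero, add_zero, hi]
  -- w is a vertex
  have hwvert : IsVertex P w := by
    refine sharpAt_vertex A b hwP ?_
    intro z hz
    obtain ⟨t, rfl⟩ := Kspan z (fun i hi hids => hz i (tightw i hi hids))
    have := hz i₂ hi₂w
    rw [dotProduct_smul, smul_eq_mul] at this
    rcases mul_eq_zero.1 this with h' | h'
    · rw [h', zero_smul]
    · exact absurd h' (ne_of_lt hi₂neg)
  -- f decreases
  have hfw : f ⬝ᵥ w < f ⬝ᵥ v := by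
    rw [hw, dotProduct_add, dotProduct_smul, smul_eq_mul]
    linarith [mul_neg_of_pos_of_neg htspos fds]
  -- the segment is a face
  set J : Finset (Fin m) := Finset.univ.filter (fun i => A i ⬝ᵥ v = b i ∧ A i ⬝ᵥ ds = 0)
    with hJ
  set c' : Fin n → ℝ := ∑ i ∈ J, A i with hc'
  have c'dot : ∀ x, c' ⬝ᵥ x = ∑ i ∈ J, A i ⬝ᵥ x := fun x => sum_dot ..
  have hJv : ∀ i ∈ J, A i ⬝ᵥ v = b i := fun i hi => (Finset.mem_filter.1 hi).2.1
  have hJw : ∀ i ∈ J, A i ⬝ᵥ w = b i := fun i hi =>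
    tightw i (Finset.mem_filter.1 hi).2.1 (Finset.mem_filter.1 hi).2.2
  have c'v : c' ⬝ᵥ v = ∑ i ∈ J, b i := by
    rw [c'dot]; exact Finset.sum_congr rfl hJv
  have c'w : c' ⬝ᵥ w = ∑ i ∈ J, b i := by
    rw [c'dot]; exact Finset.sum_congr rfl hJw
  have c'lower : ∀ x ∈ P, ∑ i ∈ J, b i ≤ c' ⬝ᵥ x := by
    intro x hx
    rw [c'dot]
    exact Finset.sum_le_sum fun i hi => by rw [← hJv i hi]; calc A i ⬝ᵥ v = b i := hJv i hi
      _ ≤ A i ⬝ᵥ x := hx i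
  have hconv : Convex ℝ P := convex_Q A b
  have hseg_eq : segment ℝ v w = {x ∈ P | ∀ y ∈ P, c' ⬝ᵥ x ≤ c' ⬝ᵥ y} := by
    ext x
    constructor
    · rintro ⟨a, bb, ha, hb, hab, rfl⟩
      have hxP : a • v + bb • w ∈ P := hconv hvP hwP ha hb hab
      refine ⟨hxP, fun y hy => ?_⟩
      have : c' ⬝ᵥ (a • v + bb • w) = ∑ i ∈ J, b i := by
        rw [dotProduct_add, dotProduct_smul, dotProduct_smul, smul_eq_mul, smul_eq_mul,
          c'v, c'w, ← add_mul, hab, one_mul]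
      rw [this]
      exact c'lower y hy
    · rintro ⟨hxP, hxmin⟩
      have h1 : c' ⬝ᵥ x = ∑ i ∈ J, b i :=
        le_antisymm (by rw [← c'v]; exact hxmin v hvP) (c'lower x hxP)
      have hgex : ∀ i ∈ J, b i ≤ A i ⬝ᵥ x := fun i hi => hxP i
      have htight : ∀ i ∈ J, A i ⬝ᵥ x = b i := by
        apply sum_tight_eq_zero A b hgex
        rw [← c'dot, h1]
      obtain ⟨t, hxt⟩ := Kspan (x - v) (fun i hi hids => by
        have : i ∈ J := Finset.mem_filter.2 ⟨Finset.mem_univ _, hi, hids⟩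
        rw [dotProduct_sub, htight i this, hi, sub_self])
      have hxvt : x = v + t • ds := by rw [← hxt]; abel
      have ht0 : 0 ≤ t := by
        have h2 : b i₁ ≤ A i₁ ⬝ᵥ x := hxP i₁
        rw [hxvt, dotProduct_add, dotProduct_smul, smul_eq_mul, hi₁T] at h2
        by_contra hneg
        push_neg at hneg
        have := mul_neg_of_neg_of_pos hneg hi₁pos
        linarith
      have htts : t ≤ ts := le_csSup hTTbdd ⟨ht0, by rw [← hxvt]; exact hxP⟩
      refine ⟨1 - t / ts, t / ts, by
        have : t / ts ≤ 1 := (div_le_one htspos).2 htts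
        linarith, div_nonneg ht0 htspos.le, by ring, ?_⟩
      rw [hxvt, hw]
      ext j
      simp only [Pi.add_apply, Pi.smul_apply, smul_eq_mul]
      field_simp
      ring
  exact ⟨w, hwvert, ⟨hvw, Or.inr ⟨c', hseg_eq⟩, pdim_segment hvw⟩, hfw⟩

end Pivot

section Face

variable {m : ℕ} (A : Fin m → Fin n → ℝ) (b : Fin m → ℝ)

lemma pivot_face (hc : IsCompact {x : Fin n → ℝ | ∀ i, A i ⬝ᵥ x ≥ b i})
    {u : Fin n → ℝ} (hu : IsVertex {x : Fin n → ℝ | ∀ i, A i ⬝ᵥ x ≥ b i} u)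
    (g f : Fin n → ℝ)
    (huF : ∀ y ∈ {x : Fin n → ℝ | ∀ i, A i ⬝ᵥ x ≥ b i}, g ⬝ᵥ u ≤ g ⬝ᵥ y)
    {y : Fin n → ℝ} (hyP : y ∈ {x : Fin n → ℝ | ∀ i, A i ⬝ᵥ x ≥ b i})
    (hfy : f ⬝ᵥ y < f ⬝ᵥ u)
    (hyF : ∀ z ∈ {x : Fin n → ℝ | ∀ i, A i ⬝ᵥ x ≥ b i}, g ⬝ᵥ y ≤ g ⬝ᵥ z) :
    ∃ u', IsVertex {x : Fin n → ℝ | ∀ i, A i ⬝ᵥ x ≥ b i} u' ∧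
      Adj {x : Fin n → ℝ | ∀ i, A i ⬝ᵥ x ≥ b i} u u' ∧
      (∀ z ∈ {x : Fin n → ℝ | ∀ i, A i ⬝ᵥ x ≥ b i}, g ⬝ᵥ u' ≤ g ⬝ᵥ z) ∧
      f ⬝ᵥ u' < f ⬝ᵥ u := by
  classical
  set P : Set (Fin n → ℝ) := {x | ∀ i, A i ⬝ᵥ x ≥ b i} with hP
  set Vfin : Finset (Fin n → ℝ) := (vertices_finite A b).toFinset with hVfin
  obtain ⟨lam₀, hlam₀⟩ :=
    (Vfin.image (fun x => (f ⬝ᵥ u - f ⬝ᵥ x) / (g ⬝ᵥ x - g ⬝ᵥ u))).exists_le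
  set lam : ℝ := max lam₀ 0 + 1 with hlam
  have hlampos : 0 < lam := by positivity
  have hlam_gt : ∀ x, IsVertex P x → g ⬝ᵥ u < g ⬝ᵥ x →
      f ⬝ᵥ u - f ⬝ᵥ x < lam * (g ⬝ᵥ x - g ⬝ᵥ u) := by
    intro x hx hgx
    have hxV : x ∈ Vfin := by rw [hVfin, Set.Finite.mem_toFinset]; exact hx
    have h1 : (f ⬝ᵥ u - f ⬝ᵥ x) / (g ⬝ᵥ x - g ⬝ᵥ u) ≤ lam₀ :=
      hlam₀ _ (Finset.mem_image_of_mem _ hxV)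
    have h2 : (f ⬝ᵥ u - f ⬝ᵥ x) / (g ⬝ᵥ x - g ⬝ᵥ u) < lam := by
      have : lam₀ ≤ max lam₀ 0 := le_max_left _ _
      linarith
    rwa [div_lt_iff₀ (by linarith)] at h2
  set h : Fin n → ℝ := f + lam • g with hh
  have hdot : ∀ x, h ⬝ᵥ x = f ⬝ᵥ x + lam * (g ⬝ᵥ x) := by
    intro x; rw [hh, add_dotProduct, smul_dotProduct, smul_eq_mul]
  have hgyu : g ⬝ᵥ y = g ⬝ᵥ u := le_antisymm (hyF u (vertex_mem hu)) (huF y hyP)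
  have hhy : h ⬝ᵥ y < h ⬝ᵥ u := by rw [hdot, hdot, hgyu]; linarith
  obtain ⟨u', hu'vert, hu'adj, hu'lt⟩ := pivot A b hc hu hyP hhy
  have hu'P : u' ∈ P := vertex_mem hu'vert
  have hge : g ⬝ᵥ u ≤ g ⬝ᵥ u' := huF u' hu'P
  have heq : g ⬝ᵥ u' = g ⬝ᵥ u := by
    rcases hge.lt_or_eq with hlt | h
    · exfalso
      have := hlam_gt u' hu'vert hlt
      rw [hdot, hdot] at hu'lt
      linarith
    · exact h.symm
  refine ⟨u', hu'vert, hu'adj, fun z hz => heq ▸ huF z hz, ?_⟩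
  rw [hdot, hdot, heq] at hu'lt
  linarith

lemma descent (hc : IsCompact {x : Fin n → ℝ | ∀ i, A i ⬝ᵥ x ≥ b i})
    (g h : Fin n → ℝ) {u : Fin n → ℝ}
    (hu : IsVertex {x : Fin n → ℝ | ∀ i, A i ⬝ᵥ x ≥ b i} u)
    (huF : ∀ y ∈ {x : Fin n → ℝ | ∀ i, A i ⬝ᵥ x ≥ b i}, g ⬝ᵥ u ≤ g ⬝ᵥ y) :
    ∃ (k : ℕ) (U : ℕ → Fin n → ℝ), U 0 = u ∧
      (∀ i ≤ k, IsVertex {x : Fin n → ℝ | ∀ i, A i ⬝ᵥ x ≥ b i} (U i) ∧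
        ∀ y ∈ {x : Fin n → ℝ | ∀ i, A i ⬝ᵥ x ≥ b i}, g ⬝ᵥ (U i) ≤ g ⬝ᵥ y) ∧
      (∀ i < k, Adj {x : Fin n → ℝ | ∀ i, A i ⬝ᵥ x ≥ b i} (U i) (U (i+1)) ∧
        h ⬝ᵥ U (i+1) < h ⬝ᵥ U i) ∧
      (∀ y ∈ {x : Fin n → ℝ | ∀ i, A i ⬝ᵥ x ≥ b i},
        (∀ z ∈ {x : Fin n → ℝ | ∀ i, A i ⬝ᵥ x ≥ b i}, g ⬝ᵥ y ≤ g ⬝ᵥ z) →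
          h ⬝ᵥ U k ≤ h ⬝ᵥ y) := by
  classical
  set P : Set (Fin n → ℝ) := {x | ∀ i, A i ⬝ᵥ x ≥ b i} with hP
  set Vfin : Finset (Fin n → ℝ) := (vertices_finite A b).toFinset with hVfin
  set meas : (Fin n → ℝ) → ℕ := fun x => (Vfin.filter (fun z => h ⬝ᵥ z < h ⬝ᵥ x)).card
    with hmeas
  suffices H : ∀ (N : ℕ) (u : Fin n → ℝ), IsVertex P u → (∀ y ∈ P, g ⬝ᵥ u ≤ g ⬝ᵥ y) →
      meas u ≤ N →
      ∃ (k : ℕ) (U : ℕ → Fin n → ℝ), U 0 = u ∧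
        (∀ i ≤ k, IsVertex P (U i) ∧ ∀ y ∈ P, g ⬝ᵥ (U i) ≤ g ⬝ᵥ y) ∧
        (∀ i < k, Adj P (U i) (U (i+1)) ∧ h ⬝ᵥ U (i+1) < h ⬝ᵥ U i) ∧
        (∀ y ∈ P, (∀ z ∈ P, g ⬝ᵥ y ≤ g ⬝ᵥ z) → h ⬝ᵥ U k ≤ h ⬝ᵥ y) by
    exact H (meas u) u hu huF le_rfl
  intro N
  induction N with
  | zero =>
    intro u hu huF hN
    by_cases hstop : ∀ y ∈ P, (∀ z ∈ P, g ⬝ᵥ y ≤ g ⬝ᵥ z) → h ⬝ᵥ u ≤ h ⬝ᵥ y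
    · exact ⟨0, fun _ => u, rfl, fun i hi => by
        rw [Nat.le_zero.1 hi]; exact ⟨hu, huF⟩,
        fun i hi => absurd hi (Nat.not_lt_zero i), hstop⟩
    · exfalso
      push_neg at hstop
      obtain ⟨y, hyP, hyF, hylt⟩ := hstop
      obtain ⟨u', hu'vert, _, _, hu'lt⟩ := pivot_face A b hc hu g h huF hyP hylt hyF
      have hsub : Vfin.filter (fun z => h ⬝ᵥ z < h ⬝ᵥ u') ⊂
          Vfin.filter (fun z => h ⬝ᵥ z < h ⬝ᵥ u) := by
        constructor
        · intro z hz
          rw [Finset.mem_filter] at hz ⊢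
          exact ⟨hz.1, lt_trans hz.2 hu'lt⟩
        · intro hcontra
          have : u' ∈ Vfin.filter (fun z => h ⬝ᵥ z < h ⬝ᵥ u) := by
            rw [Finset.mem_filter]
            exact ⟨by rw [hVfin, Set.Finite.mem_toFinset]; exact hu'vert, hu'lt⟩
          have := hcontra this
          rw [Finset.mem_filter] at this
          exact lt_irrefl _ this.2
      have := Finset.card_lt_card hsub
      simp only [hmeas] at hN
      omega
  | succ N IH =>
    intro u hu huF hN
    by_cases hstop : ∀ y ∈ P, (∀ z ∈ P, g ⬝ᵥ y ≤ g ⬝ᵥ z) → h ⬝ᵥ u ≤ h ⬝ᵥ y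
    · exact ⟨0, fun _ => u, rfl, fun i hi => by
        rw [Nat.le_zero.1 hi]; exact ⟨hu, huF⟩,
        fun i hi => absurd hi (Nat.not_lt_zero i), hstop⟩
    · push_neg at hstop
      obtain ⟨y, hyP, hyF, hylt⟩ := hstop
      obtain ⟨u', hu'vert, hu'adj, hu'F, hu'lt⟩ := pivot_face A b hc hu g h huF hyP hylt hyF
      have hsub : Vfin.filter (fun z => h ⬝ᵥ z < h ⬝ᵥ u') ⊂
          Vfin.filter (fun z => h ⬝ᵥ z < h ⬝ᵥ u) := by
        constructor
        · intro z hz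
          rw [Finset.mem_filter] at hz ⊢
          exact ⟨hz.1, lt_trans hz.2 hu'lt⟩
        · intro hcontra
          have : u' ∈ Vfin.filter (fun z => h ⬝ᵥ z < h ⬝ᵥ u) := by
            rw [Finset.mem_filter]
            exact ⟨by rw [hVfin, Set.Finite.mem_toFinset]; exact hu'vert, hu'lt⟩
          have := hcontra this
          rw [Finset.mem_filter] at this
          exact lt_irrefl _ this.2
      have hmeas' : meas u' ≤ N := by
        have := Finset.card_lt_card hsub
        simp only [hmeas] at hN ⊢
        omega
      obtain ⟨k, U, hU0, hvert, hadj, hmin⟩ := IH u' hu'vert hu'F hmeas'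
      refine ⟨k + 1, fun i => match i with | 0 => u | Nat.succ j => U j, rfl, ?_, ?_, ?_⟩
      · intro i hi
        match i with
        | 0 => exact ⟨hu, huF⟩
        | Nat.succ j => exact hvert j (by omega)
      · intro i hi
        match i with
        | 0 =>
          constructor
          · show Adj P u (U 0); rw [hU0]; exact hu'adj
          · show h ⬝ᵥ U 0 < h ⬝ᵥ u; rw [hU0]; exact hu'lt
        | Nat.succ j => exact hadj j (by omega)
      · exact hmin

end Face

def GoodPath (P : Set (Fin n → ℝ)) (V : Finset (Fin n → ℝ)) (a c : Fin n → ℝ) : Prop :=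
  ∃ (k : ℕ) (u : ℕ → Fin n → ℝ), u 0 = a ∧ u k = c ∧
    (∀ i < k, Adj P (u i) (u (i + 1))) ∧ ∀ i ≤ k, u i ∉ V

lemma Adj_symm {P : Set (Fin n → ℝ)} {x y : Fin n → ℝ} (h : Adj P x y) : Adj P y x := by
  obtain ⟨hne, hface, hdim⟩ := h
  exact ⟨hne.symm, by rwa [segment_symm], by rwa [segment_symm]⟩

lemma goodpath_symm {P : Set (Fin n → ℝ)} {V : Finset (Fin n → ℝ)} {a c : Fin n → ℝ}
    (h : GoodPath P V a c) : GoodPath P V c a := by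
  obtain ⟨k, u, h0, hk, hadj, hV⟩ := h
  refine ⟨k, fun i => u (k - i), by simp [hk], by simp [h0], ?_, ?_⟩
  · intro i hi
    show Adj P (u (k - i)) (u (k - (i + 1)))
    have h2 : k - i = (k - (i + 1)) + 1 := by omega
    rw [h2]
    exact Adj_symm (hadj _ (by omega))
  · intro i _
    show u (k - i) ∉ V
    exact hV _ (by omega)

lemma goodpath_trans {P : Set (Fin n → ℝ)} {V : Finset (Fin n → ℝ)} {a c d : Fin n → ℝ}
    (h1 : GoodPath P V a c) (h2 : GoodPath P V c d) : GoodPath P V a d := by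
  obtain ⟨k₁, u₁, h10, h1k, h1adj, h1V⟩ := h1
  obtain ⟨k₂, u₂, h20, h2k, h2adj, h2V⟩ := h2
  refine ⟨k₁ + k₂, fun i => if i ≤ k₁ then u₁ i else u₂ (i - k₁), by simp [h10], ?_, ?_, ?_⟩
  · show (if k₁ + k₂ ≤ k₁ then u₁ (k₁ + k₂) else u₂ (k₁ + k₂ - k₁)) = d
    by_cases hk2 : k₂ = 0
    · subst hk2
      simp only [Nat.add_zero, if_pos (le_refl k₁)]
      rw [h1k, ← h20, ← h2k]
    · have hcond : ¬ (k₁ + k₂ ≤ k₁) := by omega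
      rw [if_neg hcond]
      have h3 : k₁ + k₂ - k₁ = k₂ := by omega
      rw [h3, h2k]
  · intro i hi
    show Adj P (if i ≤ k₁ then u₁ i else u₂ (i - k₁))
      (if i + 1 ≤ k₁ then u₁ (i + 1) else u₂ (i + 1 - k₁))
    rcases lt_trichotomy i k₁ with hlt | heq | hgt
    · rw [if_pos (by omega : i ≤ k₁), if_pos (by omega : i + 1 ≤ k₁)]
      exact h1adj i hlt
    · subst heq
      rw [if_pos (le_refl i), if_neg (by omega : ¬ (i + 1 ≤ i))]
      have he : i + 1 - i = 1 := by omega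
      rw [he, h1k, ← h20]
      have h0lt : 0 < k₂ := by omega
      exact h2adj 0 h0lt
    · rw [if_neg (by omega : ¬ (i ≤ k₁)), if_neg (by omega : ¬ (i + 1 ≤ k₁))]
      have he : i + 1 - k₁ = (i - k₁) + 1 := by omega
      rw [he]
      exact h2adj (i - k₁) (by omega)
  · intro i hi
    show (if i ≤ k₁ then u₁ i else u₂ (i - k₁)) ∉ V
    by_cases hle : i ≤ k₁
    · rw [if_pos hle]; exact h1V i hle
    · rw [if_neg hle]; exact h2V (i - k₁) (by omega)

lemma exists_hyperplane {S : Finset (Fin n → ℝ)} (hS : S.Nonempty) (hcard : S.card ≤ n) :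
    ∃ (f : Fin n → ℝ) (α : ℝ), f ≠ 0 ∧ ∀ p ∈ S, f ⬝ᵥ p = α := by
  classical
  set Φ : (Fin n → ℝ) × ℝ →ₗ[ℝ] ({ p // p ∈ S } → ℝ) :=
    { toFun := fun fα => fun p => fα.1 ⬝ᵥ (p : Fin n → ℝ) - fα.2
      map_add' := by intro x y; funext p; simp [add_dotProduct]; ring
      map_smul' := by intro c x; funext p; simp [smul_dotProduct]; ring } with hΦ
  have hnotinj : ¬ Function.Injective Φ := by
    intro hinj
    have h1 := LinearMap.finrank_le_finrank_of_injective hinj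
    rw [Module.finrank_prod, Module.finrank_fintype_fun_eq_card, Fintype.card_fin,
      Module.finrank_self, Module.finrank_fintype_fun_eq_card, Fintype.card_coe] at h1
    omega
  have hker : LinearMap.ker Φ ≠ ⊥ := fun h => hnotinj (LinearMap.ker_eq_bot.1 h)
  obtain ⟨fα, hmem, hne⟩ := (Submodule.ne_bot_iff _).1 hker
  obtain ⟨f, α⟩ := fα
  have hval : ∀ p ∈ S, f ⬝ᵥ p - α = 0 := by
    intro p hp
    have := congrFun (LinearMap.mem_ker.1 hmem) ⟨p, hp⟩
    simpa [hΦ] using this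
  refine ⟨f, α, ?_, fun p hp => by linarith [hval p hp]⟩
  intro hf0
  obtain ⟨p, hp⟩ := hS
  have h1 := hval p hp
  rw [hf0, zero_dotProduct, zero_sub, neg_eq_zero] at h1
  apply hne
  rw [Prod.ext_iff]
  exact ⟨hf0, h1⟩

lemma exists_generic {S : Set (Fin n → ℝ)} (hS : S.Finite) :
    ∃ h₀ : Fin n → ℝ, ∀ x ∈ S, ∀ y ∈ S, h₀ ⬝ᵥ x = h₀ ⬝ᵥ y → x = y := by
  classical
  set Z : Set (Fin n → ℝ) := {z | (∃ x ∈ S, ∃ y ∈ S, z = x - y) ∧ z ≠ 0} with hZ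
  have hZfin : Z.Finite := by
    have : Z ⊆ (fun p : (Fin n → ℝ) × (Fin n → ℝ) => p.1 - p.2) '' (S ×ˢ S) := by
      rintro z ⟨⟨x, hx, y, hy, rfl⟩, _⟩
      exact ⟨(x, y), ⟨hx, hy⟩, rfl⟩
    exact ((hS.prod hS).image _).subset this
  set pz : (Fin n → ℝ) → Polynomial ℝ :=
    fun z => ∑ i : Fin n, Polynomial.C (z i) * Polynomial.X ^ (i : ℕ) with hpz
  have hpz0 : ∀ z ∈ Z, pz z ≠ 0 := by
    rintro z ⟨_, hz0⟩ hcon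
    apply hz0
    funext i
    have := congrArg (fun p => Polynomial.coeff p (i : ℕ)) hcon
    simp only [hpz, Polynomial.finset_sum_coeff, Polynomial.coeff_C_mul,
      Polynomial.coeff_X_pow, Polynomial.coeff_zero, mul_ite, mul_one, mul_zero] at this
    simp only [Fin.val_eq_val, Finset.sum_ite_eq, Finset.mem_univ, if_true] at this
    exact this
  have hroots : (⋃ z ∈ Z, {t : ℝ | Polynomial.IsRoot (pz z) t}).Finite :=
    Set.Finite.biUnion hZfin fun z hz => Polynomial.finite_setOf_isRoot (hpz0 z hz)
  obtain ⟨t, ht⟩ := hroots.infinite_compl.nonempty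
  refine ⟨fun i => t ^ (i : ℕ), fun x hx y hy hxy => ?_⟩
  by_contra hne
  have hzZ : x - y ∈ Z := ⟨⟨x, hx, y, hy, rfl⟩, sub_ne_zero.2 hne⟩
  have hroot : Polynomial.IsRoot (pz (x - y)) t := by
    have hdot : (fun i : Fin n => t ^ (i : ℕ)) ⬝ᵥ (x - y) = 0 := by
      rw [dotProduct_sub, hxy, sub_self]
    rw [Polynomial.IsRoot]
    rw [hpz]
    simp only [Polynomial.eval_finset_sum, Polynomial.eval_mul, Polynomial.eval_C,
      Polynomial.eval_pow, Polynomial.eval_X]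
    rw [← hdot]
    simp [dotProduct, mul_comm]
  exact ht (Set.mem_biUnion hzZ hroot)

noncomputable def dotL (f : Fin n → ℝ) : (Fin n → ℝ) →ₗ[ℝ] ℝ where
  toFun x := f ⬝ᵥ x
  map_add' x y := dotProduct_add f x y
  map_smul' c x := by simp [dotProduct_smul]

lemma exists_dot_lt {P : Set (Fin n → ℝ)} (hspan : vectorSpan ℝ P = ⊤)
    {f : Fin n → ℝ} (hf : f ≠ 0) : ∃ p ∈ P, ∃ q ∈ P, f ⬝ᵥ p < f ⬝ᵥ q := by
  by_contra hcon
  push_neg at hcon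
  have hker : vectorSpan ℝ P ≤ LinearMap.ker (dotL f) := by
    rw [vectorSpan, Submodule.span_le]
    rintro z hz
    rw [Set.mem_vsub] at hz
    obtain ⟨xx, hx, yy, hy, rfl⟩ := hz
    have h1 := hcon xx hx yy hy
    have h2 := hcon yy hy xx hx
    have h3 : f ⬝ᵥ xx = f ⬝ᵥ yy := le_antisymm h2 h1
    simp only [SetLike.mem_coe, LinearMap.mem_ker, dotL, LinearMap.coe_mk, AddHom.coe_mk,
      vsub_eq_sub, dotProduct_sub, h3, sub_self]
  have hff : f ⬝ᵥ f = 0 := by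
    have : f ∈ LinearMap.ker (dotL f) := hker (hspan ▸ Submodule.mem_top)
    simpa [dotL] using this
  exact hf (dotProduct_self_eq_zero.1 hff)

lemma core {m : ℕ} (A : Fin m → Fin n → ℝ) (b : Fin m → ℝ)
    (hc : IsCompact {x : Fin n → ℝ | ∀ i, A i ⬝ᵥ x ≥ b i})
    (V : Finset (Fin n → ℝ)) (f : Fin n → ℝ) (α : ℝ)
    (hfV : ∀ u ∈ V, f ⬝ᵥ u = α)
    (hM : ∃ x ∈ {x : Fin n → ℝ | ∀ i, A i ⬝ᵥ x ≥ b i}, α < f ⬝ᵥ x)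
    (h₀ : Fin n → ℝ)
    (hgen : ∀ x y, IsVertex {x : Fin n → ℝ | ∀ i, A i ⬝ᵥ x ≥ b i} x →
      IsVertex {x : Fin n → ℝ | ∀ i, A i ⬝ᵥ x ≥ b i} y → h₀ ⬝ᵥ x = h₀ ⬝ᵥ y → x = y)
    {v w : Fin n → ℝ}
    (hv : IsVertex {x : Fin n → ℝ | ∀ i, A i ⬝ᵥ x ≥ b i} v)
    (hw : IsVertex {x : Fin n → ℝ | ∀ i, A i ⬝ᵥ x ≥ b i} w)
    (hvV : v ∉ V) (hwV : w ∉ V) (hfv : α ≤ f ⬝ᵥ v) (hfw : α ≤ f ⬝ᵥ w) :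
    GoodPath {x : Fin n → ℝ | ∀ i, A i ⬝ᵥ x ≥ b i} V v w := by
  classical
  set P : Set (Fin n → ℝ) := {x | ∀ i, A i ⬝ᵥ x ≥ b i} with hP
  obtain ⟨x₀, hx₀P, hx₀⟩ := hM
  have asc : ∀ x : Fin n → ℝ, IsVertex P x → x ∉ V → α ≤ f ⬝ᵥ x →
      ∃ p, IsVertex P p ∧ (∀ y ∈ P, f ⬝ᵥ y ≤ f ⬝ᵥ p) ∧ GoodPath P V x p := by
    intro x hx hxV hfx
    have h0F : ∀ y ∈ P, (0 : Fin n → ℝ) ⬝ᵥ x ≤ (0 : Fin n → ℝ) ⬝ᵥ y := by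
      intro y hy; rw [zero_dotProduct, zero_dotProduct]
    obtain ⟨k, U, hU0, hvert, hadj, hmin⟩ := descent A b hc 0 (-f) hx h0F
    have hmax : ∀ y ∈ P, f ⬝ᵥ y ≤ f ⬝ᵥ U k := by
      intro y hy
      have := hmin y hy (fun z hz => by rw [zero_dotProduct, zero_dotProduct])
      rw [neg_dotProduct, neg_dotProduct] at this
      linarith
    have hstep : ∀ i < k, f ⬝ᵥ U i < f ⬝ᵥ U (i+1) := by
      intro i hi
      have := (hadj i hi).2
      rw [neg_dotProduct, neg_dotProduct] at this
      linarith
    have hmono : ∀ j, j ≤ k → 0 < j → f ⬝ᵥ U 0 < f ⬝ᵥ U j := by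
      intro j
      induction j with
      | zero => intro _ h2; exact absurd h2 (lt_irrefl 0)
      | succ j ih =>
        intro hj _
        rcases Nat.eq_zero_or_pos j with rfl | hj0
        · exact hstep 0 (by omega)
        · exact lt_trans (ih (by omega) hj0) (hstep j (by omega))
    refine ⟨U k, (hvert k le_rfl).1, hmax, ⟨k, U, hU0, rfl, fun i hi => (hadj i hi).1, ?_⟩⟩
    intro i hik
    rcases Nat.eq_zero_or_pos i with rfl | hi0
    · rw [hU0]; exact hxV
    · intro hiV
      have h1 : f ⬝ᵥ U i = α := hfV _ hiV
      have h2 := hmono i hik hi0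
      rw [hU0] at h2
      linarith
  obtain ⟨p, hpvert, hpmax, hpath1⟩ := asc v hv hvV hfv
  obtain ⟨q, hqvert, hqmax, hpath2⟩ := asc w hw hwV hfw
  have hpF : ∀ y ∈ P, (-f) ⬝ᵥ p ≤ (-f) ⬝ᵥ y := by
    intro y hy; rw [neg_dotProduct, neg_dotProduct]; exact neg_le_neg (hpmax y hy)
  have hqF : ∀ y ∈ P, (-f) ⬝ᵥ q ≤ (-f) ⬝ᵥ y := by
    intro y hy; rw [neg_dotProduct, neg_dotProduct]; exact neg_le_neg (hqmax y hy)
  have conn : ∀ x : Fin n → ℝ, IsVertex P x → (∀ y ∈ P, (-f) ⬝ᵥ x ≤ (-f) ⬝ᵥ y) →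
      ∃ mm, IsVertex P mm ∧ (∀ y ∈ P, (-f) ⬝ᵥ mm ≤ (-f) ⬝ᵥ y) ∧
        (∀ y ∈ P, (∀ z ∈ P, (-f) ⬝ᵥ y ≤ (-f) ⬝ᵥ z) → h₀ ⬝ᵥ mm ≤ h₀ ⬝ᵥ y) ∧
        GoodPath P V x mm := by
    intro x hx hxF
    obtain ⟨k, U, hU0, hvert, hadj, hmin⟩ := descent A b hc (-f) h₀ hx hxF
    refine ⟨U k, (hvert k le_rfl).1, (hvert k le_rfl).2, hmin, ⟨k, U, hU0, rfl,
      fun i hi => (hadj i hi).1, ?_⟩⟩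
    intro i hik hiV
    have h1 : (-f) ⬝ᵥ U i ≤ (-f) ⬝ᵥ x₀ := (hvert i hik).2 x₀ hx₀P
    rw [neg_dotProduct, neg_dotProduct] at h1
    have h2 : f ⬝ᵥ U i = α := hfV _ hiV
    linarith
  obtain ⟨m₁, hm₁vert, hm₁F, hm₁min, hpath3⟩ := conn p hpvert hpF
  obtain ⟨m₂, hm₂vert, hm₂F, hm₂min, hpath4⟩ := conn q hqvert hqF
  have hm12 : m₁ = m₂ := by
    apply hgen _ _ hm₁vert hm₂vert
    have h1 : h₀ ⬝ᵥ m₁ ≤ h₀ ⬝ᵥ m₂ := hm₁min m₂ (vertex_mem hm₂vert) hm₂F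
    have h2 : h₀ ⬝ᵥ m₂ ≤ h₀ ⬝ᵥ m₁ := hm₂min m₁ (vertex_mem hm₁vert) hm₁F
    linarith
  subst hm12
  exact goodpath_trans (goodpath_trans hpath1 hpath3)
    (goodpath_symm (goodpath_trans hpath2 hpath4))

end BalinskiAux

open BalinskiAux

theorem balinski {n : ℕ} (P : Set (Fin n → ℝ)) (hP : IsPolyhedron P)
    (hc : IsCompact P) (hd : pdim P = n) (V : Finset (Fin n → ℝ))
    (hV : ∀ u ∈ V, IsVertex P u) (hcard : V.card ≤ n - 1)
    (v w : Fin n → ℝ) (hv : IsVertex P v) (hw : IsVertex P w)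
    (hvV : v ∉ V) (hwV : w ∉ V) :
    ∃ (k : ℕ) (u : ℕ → Fin n → ℝ), u 0 = v ∧ u k = w ∧
      (∀ i < k, Adj P (u i) (u (i + 1))) ∧ ∀ i ≤ k, u i ∉ V := by

  classical
  rcases Nat.eq_zero_or_pos n with hn | hn
  · subst hn
    have hvw : v = w := funext fun i => i.elim0
    exact ⟨0, fun _ => v, rfl, hvw ▸ rfl, fun i hi => absurd hi (Nat.not_lt_zero i),
      fun i _ => hvV⟩
  obtain ⟨m, A, b, hPA⟩ := hP
  subst hPA
  set Q : Set (Fin n → ℝ) := {x | ∀ i, A i ⬝ᵥ x ≥ b i} with hQ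
  have hQne : ¬ (Q = ∅) := by
    intro h
    rw [pdim, if_pos h] at hd
    omega
  have hfrk : Module.finrank ℝ (vectorSpan ℝ Q) = n := by
    rw [pdim, if_neg hQne] at hd
    exact_mod_cast hd
  have hspan : vectorSpan ℝ Q = ⊤ := by
    apply Submodule.eq_top_of_finrank_eq
    rw [hfrk, Module.finrank_fintype_fun_eq_card, Fintype.card_fin]
  have hScard : (insert v V).card ≤ n :=
    le_trans (Finset.card_insert_le _ _) (by omega)
  obtain ⟨f, α, hf0, hfS⟩ := exists_hyperplane ⟨v, Finset.mem_insert_self v V⟩ hScard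
  have hfv : f ⬝ᵥ v = α := hfS v (Finset.mem_insert_self v V)
  have hfV : ∀ u ∈ V, f ⬝ᵥ u = α := fun u hu => hfS u (Finset.mem_insert_of_mem hu)
  obtain ⟨h₀, hgen'⟩ := exists_generic (vertices_finite A b)
  have hgen : ∀ x y, IsVertex Q x → IsVertex Q y → h₀ ⬝ᵥ x = h₀ ⬝ᵥ y → x = y :=
    fun x y hx hy => hgen' x hx y hy
  by_cases hbr : (α ≤ f ⬝ᵥ w) ∧ (∃ x ∈ Q, α < f ⬝ᵥ x)
  · obtain ⟨hfw, hM⟩ := hbr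
    exact core A b hc V f α hfV hM h₀ hgen hv hw hvV hwV (le_of_eq hfv.symm) hfw
  · have hprem : (f ⬝ᵥ w ≤ α) ∧ ∃ x ∈ Q, f ⬝ᵥ x < α := by
      by_cases hw' : α ≤ f ⬝ᵥ w
      · have hnot : ¬ ∃ x ∈ Q, α < f ⬝ᵥ x := fun h => hbr ⟨hw', h⟩
        push_neg at hnot
        obtain ⟨p, hp, q, hq, hpq⟩ := exists_dot_lt hspan hf0
        exact ⟨hnot w (vertex_mem hw), ⟨p, hp, lt_of_lt_of_le hpq (hnot q hq)⟩⟩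
      · push_neg at hw'
        exact ⟨hw'.le, ⟨w, vertex_mem hw, hw'⟩⟩
    obtain ⟨hfw', x₁, hx₁Q, hx₁⟩ := hprem
    have hfV' : ∀ u ∈ V, (-f) ⬝ᵥ u = -α := fun u hu => by rw [neg_dotProduct, hfV u hu]
    have hM' : ∃ x ∈ Q, -α < (-f) ⬝ᵥ x := ⟨x₁, hx₁Q, by rw [neg_dotProduct]; linarith⟩
    exact core A b hc V (-f) (-α) hfV' hM' h₀ hgen hv hw hvV hwV
      (by rw [neg_dotProduct, hfv]) (by rw [neg_dotProduct]; linarith)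
end
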